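/- arXiv:0906.4927 — 7 statements merged into one kernel-verified Lean document; each statement's English description precedes it below -/
import Mathlib

section
/- For every 0 ≤ i ≤ n and every j ≥ 0, the probability that a randomly generated possible world of the reduced relation X_i has exactly j tuples equals the Poisson-binomial probability of the projected x-tuple existence probabilities: Σ_{S ⊆ {1,…,i}, g injective on S, |S| = j} Pr_i(S) = PB_j(ρ_i(1),…,ρ_i(m)). -/
open Finset
open scoped Classical

/-- Poisson-binomial probability of exactly `j` successes among independent
events indexed by `A`, with success probabilities `q`. -/
noncomputable def PB {α : Type*} [DecidableEq α] (A : Finset α) (q : α → ℝ) (j : ℕ) : ℝ :=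
  ∑ T ∈ A.powersetCard j, (∏ a ∈ T, q a) * ∏ a ∈ A \ T, (1 - q a)

/-- Probability of a possible world `S` of the full x-Relation. -/
noncomputable def worldProb {n m : ℕ} (g : Fin n → Fin m) (p : Fin n → ℝ)
    (S : Finset (Fin n)) : ℝ :=
  (∏ t ∈ S, p t) *
    ∏ a ∈ Finset.univ.filter (fun a : Fin m => ∀ t ∈ S, g t ≠ a),
      (1 - ∑ t ∈ Finset.univ.filter (fun t : Fin n => g t = a), p t)

/-- `rho g p i a` = existence probability of x-tuple `a` projected to the reduced
relation on the top `i` tuples (`i` is a 1-based count, tuples are 0-based). -/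
noncomputable def rho {n m : ℕ} (g : Fin n → Fin m) (p : Fin n → ℝ) (i : ℕ) (a : Fin m) : ℝ :=
  ∑ t ∈ Finset.univ.filter (fun t : Fin n => (t : ℕ) < i ∧ g t = a), p t

/-- Probability of a possible world `S` of the reduced relation on the top `i` tuples. -/
noncomputable def worldProbI {n m : ℕ} (g : Fin n → Fin m) (p : Fin n → ℝ) (i : ℕ)
    (S : Finset (Fin n)) : ℝ :=
  (∏ t ∈ S, p t) *
    ∏ a ∈ Finset.univ.filter (fun a : Fin m => ∀ t ∈ S, g t ≠ a), (1 - rho g p i a)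

/-- `pij g p i j` = probability that tuple `i` is ranked at the `j`-th position
(`j ≥ 1`) across all possible worlds: the sum of `worldProb` over possible worlds
containing `i` together with exactly `j - 1` higher-score tuples. -/
noncomputable def pij {n m : ℕ} (g : Fin n → Fin m) (p : Fin n → ℝ) (i : Fin n) (j : ℕ) : ℝ :=
  ∑ S ∈ Finset.univ.filter (fun S : Finset (Fin n) =>
      Set.InjOn g ↑S ∧ i ∈ S ∧ (S.filter (fun t => (t : ℕ) < (i : ℕ))).card = j - 1),
    worldProb g p S

/-- `tkp g p k i` = top-`k` probability of tuple `i`. -/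
noncomputable def tkp {n m : ℕ} (g : Fin n → Fin m) (p : Fin n → ℝ) (k : ℕ) (i : Fin n) : ℝ :=
  ∑ j ∈ Finset.Icc 1 k, pij g p i j

/-- The probability that a randomly generated possible world of the reduced relation
`X_i` has exactly `j` tuples equals the Poisson-binomial probability of the projected
x-tuple existence probabilities. -/
theorem count_dist_eq_poisson_binomial (n m : ℕ) (g : Fin n → Fin m) (p : Fin n → ℝ)
    (hp : ∀ t, 0 ≤ p t)
    (hsum : ∀ a : Fin m, ∑ t ∈ Finset.univ.filter (fun t : Fin n => g t = a), p t ≤ 1)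
    (i : ℕ) (hi : i ≤ n) (j : ℕ) :
    ∑ S ∈ Finset.univ.filter (fun S : Finset (Fin n) =>
        (∀ t ∈ S, (t : ℕ) < i) ∧ Set.InjOn g ↑S ∧ S.card = j),
      worldProbI g p i S
      = PB Finset.univ (rho g p i) j := by
  classical
  -- rewrite the RHS as a sum over a sigma type: choose T (the set of x-tuples present)
  -- and, for each a ∈ T, a tuple in the fiber of a among the top i tuples
  have hPB : PB Finset.univ (rho g p i) j
      = ∑ x ∈ (Finset.univ.powersetCard j).sigma
            (fun T : Finset (Fin m) =>
              T.pi (fun a => Finset.univ.filter (fun t : Fin n => (t : ℕ) < i ∧ g t = a))),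
          (∏ a ∈ x.1.attach, p (x.2 a.1 a.2)) * ∏ a ∈ Finset.univ \ x.1, (1 - rho g p i a) := by
    rw [PB, Finset.sum_sigma]
    refine Finset.sum_congr rfl fun T hT => ?_
    dsimp only
    rw [← Finset.sum_mul]
    congr 1
    simp only [rho]
    rw [Finset.prod_sum]
  rw [hPB]
  refine (Finset.sum_bij
    (fun (x : Σ T : Finset (Fin m), ∀ a ∈ T, Fin n) _ =>
      x.1.attach.image (fun a => x.2 a.1 a.2)) ?_ ?_ ?_ ?_).symm
  · -- membership
    rintro ⟨T, f⟩ hx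
    dsimp only
    simp only [Finset.mem_sigma, Finset.mem_powersetCard, Finset.mem_pi,
      Finset.mem_filter, Finset.mem_univ, true_and] at hx
    obtain ⟨⟨-, hTcard⟩, hf⟩ := hx
    have hg : ∀ (a : Fin m) (ha : a ∈ T), g (f a ha) = a := fun a ha => (hf a ha).2
    have hinj : ∀ a ∈ T.attach, ∀ b ∈ T.attach,
        f a.1 a.2 = f b.1 b.2 → a = b := by
      rintro a - b - hab
      have : g (f a.1 a.2) = g (f b.1 b.2) := by rw [hab]
      rw [hg, hg] at this
      exact Subtype.ext this
    simp only [Finset.mem_filter, Finset.mem_univ, true_and]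
    refine ⟨?_, ?_, ?_⟩
    · intro t ht
      obtain ⟨a, -, rfl⟩ := Finset.mem_image.mp ht
      exact (hf a.1 a.2).1
    · intro t1 ht1 t2 ht2 h12
      obtain ⟨a, -, rfl⟩ := Finset.mem_image.mp (Finset.mem_coe.mp ht1)
      obtain ⟨b, -, rfl⟩ := Finset.mem_image.mp (Finset.mem_coe.mp ht2)
      rw [hg, hg] at h12
      rw [Subtype.ext h12]
    · rw [Finset.card_image_of_injOn (fun a ha b hb => hinj a ha b hb),
        Finset.card_attach, hTcard]
  · -- injectivity
    rintro ⟨T1, f1⟩ hx1 ⟨T2, f2⟩ hx2 he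
    dsimp only at he
    simp only [Finset.mem_sigma, Finset.mem_powersetCard, Finset.mem_pi,
      Finset.mem_filter, Finset.mem_univ, true_and] at hx1 hx2
    have hg1 : ∀ (a : Fin m) (ha : a ∈ T1), g (f1 a ha) = a := fun a ha => (hx1.2 a ha).2
    have hg2 : ∀ (a : Fin m) (ha : a ∈ T2), g (f2 a ha) = a := fun a ha => (hx2.2 a ha).2
    have hT : T1 = T2 := by
      have h1 : (T1.attach.image (fun a => f1 a.1 a.2)).image g = T1 := by
        rw [Finset.image_image]
        have : (g ∘ fun a : {x // x ∈ T1} => f1 a.1 a.2) = fun a => a.1 := by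
          funext a; exact hg1 a.1 a.2
        rw [this, Finset.attach_image_val]
      have h2 : (T2.attach.image (fun a => f2 a.1 a.2)).image g = T2 := by
        rw [Finset.image_image]
        have : (g ∘ fun a : {x // x ∈ T2} => f2 a.1 a.2) = fun a => a.1 := by
          funext a; exact hg2 a.1 a.2
        rw [this, Finset.attach_image_val]
      rw [← h1, ← h2, he]
    subst hT
    have hf : f1 = f2 := by
      funext a ha
      have hm : f1 a ha ∈ T1.attach.image (fun a => f2 a.1 a.2) := by
        rw [← he]
        exact Finset.mem_image.mpr ⟨⟨a, ha⟩, Finset.mem_attach _ _, rfl⟩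
      obtain ⟨b, -, hb⟩ := Finset.mem_image.mp hm
      have : g (f2 b.1 b.2) = g (f1 a ha) := by rw [hb]
      rw [hg2, hg1] at this
      subst this
      exact hb.symm
    rw [hf]
  · -- surjectivity
    intro S hS
    simp only [Finset.mem_filter, Finset.mem_univ, true_and] at hS
    obtain ⟨hlt, hinj, hcard⟩ := hS
    have hexu : ∀ a ∈ S.image g, ∃! t, t ∈ S ∧ g t = a := by
      intro a ha
      obtain ⟨t, ht, rfl⟩ := Finset.mem_image.mp ha
      exact ⟨t, ⟨ht, rfl⟩, fun t' ⟨ht', he'⟩ =>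
        hinj (Finset.mem_coe.mpr ht') (Finset.mem_coe.mpr ht) he'⟩
    refine ⟨⟨S.image g, fun a ha => Finset.choose (fun t => g t = a) S (hexu a ha)⟩, ?_, ?_⟩
    · simp only [Finset.mem_sigma, Finset.mem_powersetCard, Finset.mem_pi,
        Finset.mem_filter, Finset.mem_univ, true_and]
      refine ⟨⟨Finset.subset_univ _, ?_⟩, ?_⟩
      · rw [Finset.card_image_of_injOn hinj, hcard]
      · intro a ha
        exact ⟨hlt _ (Finset.choose_mem _ _ _),
          Finset.choose_property (fun t => g t = a) S (hexu a ha)⟩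
    · ext t
      simp only [Finset.mem_image, Finset.mem_attach, true_and, Subtype.exists]
      constructor
      · rintro ⟨a, ha, rfl⟩
        exact Finset.choose_mem _ _ _
      · intro ht
        refine ⟨g t, ⟨t, ht, rfl⟩, ?_⟩
        exact ((hexu (g t) (Finset.mem_image_of_mem g ht)).unique
          ⟨Finset.choose_mem _ _ _,
            Finset.choose_property (fun t' => g t' = g t) S _⟩ ⟨ht, rfl⟩)
  · -- values agree
    rintro ⟨T, f⟩ hx
    simp only [Finset.mem_sigma, Finset.mem_powersetCard, Finset.mem_pi,
      Finset.mem_filter, Finset.mem_univ, true_and] at hx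
    have hg : ∀ (a : Fin m) (ha : a ∈ T), g (f a ha) = a := fun a ha => (hx.2 a ha).2
    dsimp only
    rw [worldProbI]
    congr 1
    · rw [Finset.prod_image]
      rintro a - b - hab
      have : g (f a.1 a.2) = g (f b.1 b.2) := congrArg g hab
      rw [hg, hg] at this
      exact Subtype.ext this
    · congr 1
      ext a
      rw [Finset.mem_filter, Finset.mem_sdiff]
      simp only [Finset.mem_univ, true_and]
      constructor
      · intro ha t ht hgt
        obtain ⟨b, -, rfl⟩ := Finset.mem_image.mp ht
        rw [hg] at hgt
        exact ha (hgt ▸ b.2)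
      · intro h ha
        exact h (f a ha) (Finset.mem_image.mpr ⟨⟨a, ha⟩, Finset.mem_attach _ _, rfl⟩) (hg a ha)
end

section
/- The rank probability p_{i,j} is the same whether computed over the full x-Relation or over the reduced relation X_i on the top-i tuples: for all 1 ≤ i ≤ n and j ≥ 1, Σ_{S ⊆ {1,…,n}, g injective on S, i ∈ S, |S ∩ {1,…,i−1}| = j−1} Pr(S) = Σ_{S ⊆ {1,…,i}, g injective on S, i ∈ S, |S ∩ {1,…,i−1}| = j−1} Pr_i(S). -/
open Finset
open scoped Classical

/- Auxiliary lemmas -/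

lemma rho_split {n m : ℕ} (g : Fin n → Fin m) (p : Fin n → ℝ) (k : ℕ) (a : Fin m) :
    ∑ t ∈ Finset.univ.filter (fun t : Fin n => g t = a), p t
      = rho g p k a + ∑ t ∈ Finset.univ.filter (fun t : Fin n => ¬ ((t:ℕ) < k) ∧ g t = a), p t := by
  rw [rho]
  rw [← Finset.sum_filter_add_sum_filter_not (Finset.univ.filter (fun t : Fin n => g t = a))
    (fun t => (t:ℕ) < k) p, Finset.filter_filter, Finset.filter_filter]
  congr 1 <;> apply Finset.sum_congr _ (fun _ _ => rfl) <;> (ext t; simp; tauto)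


lemma key {n m : ℕ} (g : Fin n → Fin m) (p : Fin n → ℝ) (k : ℕ) (A : Finset (Fin m)) :
    ∑ S₁ ∈ Finset.univ.filter (fun S₁ : Finset (Fin n) =>
        (∀ t ∈ S₁, ¬ ((t:ℕ) < k) ∧ g t ∈ A) ∧ Set.InjOn g ↑S₁),
      (∏ t ∈ S₁, p t) *
        ∏ a ∈ A.filter (fun a => ∀ t ∈ S₁, g t ≠ a),
          (1 - ∑ t ∈ Finset.univ.filter (fun t : Fin n => g t = a), p t)
    = ∏ a ∈ A, (1 - rho g p k a) := by
  induction A using Finset.induction_on with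
  | empty =>
      have h1 : Finset.univ.filter (fun S₁ : Finset (Fin n) =>
          (∀ t ∈ S₁, ¬ ((t:ℕ) < k) ∧ g t ∈ (∅ : Finset (Fin m))) ∧ Set.InjOn g ↑S₁)
          = {∅} := by
        ext S₁
        simp only [Finset.mem_filter, Finset.mem_univ, true_and, Finset.mem_singleton]
        constructor
        · rintro ⟨h, -⟩
          by_contra hne
          obtain ⟨t, ht⟩ := Finset.nonempty_iff_ne_empty.2 hne
          exact absurd (h t ht).2 (by simp)
        · rintro rfl
          exact ⟨by simp, by simp [Set.InjOn]⟩
      rw [h1]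
      simp
  | @insert a₀ A ha₀ IH =>
      set s := Finset.univ.filter (fun S₁ : Finset (Fin n) =>
        (∀ t ∈ S₁, ¬ ((t:ℕ) < k) ∧ g t ∈ insert a₀ A) ∧ Set.InjOn g ↑S₁) with hs
      rw [← Finset.sum_filter_add_sum_filter_not s (fun S₁ => ∃ t ∈ S₁, g t = a₀)]
      have hmiss : ∑ S₁ ∈ s.filter (fun S₁ => ¬ ∃ t ∈ S₁, g t = a₀),
          (∏ t ∈ S₁, p t) *
            ∏ a ∈ (insert a₀ A).filter (fun a => ∀ t ∈ S₁, g t ≠ a),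
              (1 - ∑ t ∈ Finset.univ.filter (fun t : Fin n => g t = a), p t)
          = (1 - ∑ t ∈ Finset.univ.filter (fun t : Fin n => g t = a₀), p t)
            * ∏ a ∈ A, (1 - rho g p k a) := by
        have hset : s.filter (fun S₁ => ¬ ∃ t ∈ S₁, g t = a₀)
            = Finset.univ.filter (fun S₁ : Finset (Fin n) =>
                (∀ t ∈ S₁, ¬ ((t:ℕ) < k) ∧ g t ∈ A) ∧ Set.InjOn g ↑S₁) := by
          rw [hs, Finset.filter_filter]
          ext S₁
          simp only [Finset.mem_filter, Finset.mem_univ, true_and, Finset.mem_insert,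
            not_exists, not_and]
          constructor
          · rintro ⟨⟨h1, h2⟩, h3⟩
            refine ⟨fun t ht => ⟨(h1 t ht).1, ?_⟩, h2⟩
            rcases (h1 t ht).2 with h | h
            · exact absurd h (h3 t ht)
            · exact h
          · rintro ⟨h1, h2⟩
            refine ⟨⟨fun t ht => ⟨(h1 t ht).1, Or.inr (h1 t ht).2⟩, h2⟩,
              fun t ht he => ha₀ (he ▸ (h1 t ht).2)⟩
        rw [hset, ← IH, Finset.mul_sum]
        apply Finset.sum_congr rfl
        intro S₁ hS₁
        simp only [Finset.mem_filter, Finset.mem_univ, true_and] at hS₁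
        have hne : ∀ t ∈ S₁, g t ≠ a₀ := fun t ht he => ha₀ (he ▸ (hS₁.1 t ht).2)
        have hfi : (insert a₀ A).filter (fun a => ∀ t ∈ S₁, g t ≠ a)
            = insert a₀ (A.filter (fun a => ∀ t ∈ S₁, g t ≠ a)) := by
          rw [Finset.filter_insert, if_pos hne]
        rw [hfi, Finset.prod_insert (fun hmem => ha₀ (Finset.mem_of_mem_filter a₀ hmem))]
        ring
      have hhit : ∑ S₁ ∈ s.filter (fun S₁ => ∃ t ∈ S₁, g t = a₀),
          (∏ t ∈ S₁, p t) *
            ∏ a ∈ (insert a₀ A).filter (fun a => ∀ t ∈ S₁, g t ≠ a),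
              (1 - ∑ t ∈ Finset.univ.filter (fun t : Fin n => g t = a), p t)
          = (∑ t ∈ Finset.univ.filter (fun t : Fin n => ¬ ((t:ℕ) < k) ∧ g t = a₀), p t)
            * ∏ a ∈ A, (1 - rho g p k a) := by
        have ex : ∀ S₁ ∈ s.filter (fun S₁ => ∃ t ∈ S₁, g t = a₀),
            ∃ t, t ∈ S₁ ∧ g t = a₀ := by
          intro S₁ h
          have := (Finset.mem_filter.1 h).2
          obtain ⟨t, ht, hgt⟩ := this
          exact ⟨t, ht, hgt⟩
        have htrans : ∑ S₁ ∈ s.filter (fun S₁ => ∃ t ∈ S₁, g t = a₀),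
            (∏ t ∈ S₁, p t) *
              ∏ a ∈ (insert a₀ A).filter (fun a => ∀ t ∈ S₁, g t ≠ a),
                (1 - ∑ t ∈ Finset.univ.filter (fun t : Fin n => g t = a), p t)
            = ∑ x ∈ (Finset.univ.filter (fun t : Fin n => ¬ ((t:ℕ) < k) ∧ g t = a₀)) ×ˢ
                (Finset.univ.filter (fun S₁ : Finset (Fin n) =>
                  (∀ t ∈ S₁, ¬ ((t:ℕ) < k) ∧ g t ∈ A) ∧ Set.InjOn g ↑S₁)),
                p x.1 * ((∏ t ∈ x.2, p t) *
                  ∏ a ∈ A.filter (fun a => ∀ t ∈ x.2, g t ≠ a),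
                    (1 - ∑ t ∈ Finset.univ.filter (fun t : Fin n => g t = a), p t)) := by
          refine Finset.sum_bij' (fun S₁ h => ((ex S₁ h).choose, S₁.erase (ex S₁ h).choose))
            (fun x _ => insert x.1 x.2) ?_ ?_ ?_ ?_ ?_
          · -- hi : maps into product
            intro S₁ h
            obtain ⟨ht₀, hg₀⟩ := (ex S₁ h).choose_spec
            set t₀ := (ex S₁ h).choose
            have hmem := Finset.mem_filter.1 ((Finset.mem_filter.1 h).1)
            have hpred := hmem.2.1
            have hinj := hmem.2.2
            rw [Finset.mem_product]
            constructor
            · simp only [Finset.mem_filter, Finset.mem_univ, true_and]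
              exact ⟨(hpred t₀ ht₀).1, hg₀⟩
            · simp only [Finset.mem_filter, Finset.mem_univ, true_and]
              refine ⟨fun t ht => ?_, hinj.mono (by simp [Finset.coe_subset, Finset.erase_subset])⟩
              have ht' := Finset.mem_of_mem_erase ht
              have hne := Finset.ne_of_mem_erase ht
              refine ⟨(hpred t ht').1, ?_⟩
              rcases Finset.mem_insert.1 (hpred t ht').2 with hh | hh
              · exact absurd (hinj (by exact ht') (by exact ht₀) (hh.trans hg₀.symm)) hne
              · exact hh
          · -- hj : inverse maps into s-filter
            rintro ⟨t, S₁'⟩ hx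
            rw [Finset.mem_product] at hx
            simp only [Finset.mem_filter, Finset.mem_univ, true_and] at hx
            have htk := hx.1.1
            have hgt := hx.1.2
            have hpred' := hx.2.1
            have hinj' := hx.2.2
            have htS : t ∉ S₁' := fun h => ha₀ (hgt ▸ (hpred' t h).2)
            rw [Finset.mem_filter]
            refine ⟨?_, ⟨t, Finset.mem_insert_self t S₁', hgt⟩⟩
            rw [hs, Finset.mem_filter]
            refine ⟨Finset.mem_univ _, fun t' ht' => ?_, ?_⟩
            · rcases Finset.mem_insert.1 ht' with rfl | hh
              · exact ⟨htk, by rw [hgt]; exact Finset.mem_insert_self a₀ A⟩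
              · exact ⟨(hpred' t' hh).1, Finset.mem_insert_of_mem (hpred' t' hh).2⟩
            · rw [Finset.coe_insert]
              intro x hx' y hy' hxy
              rcases hx' with rfl | hx' <;> rcases hy' with rfl | hy'
              · rfl
              · exact absurd ((hxy.symm.trans hgt) ▸ (hpred' y hy').2) ha₀
              · exact absurd ((hxy.trans hgt) ▸ (hpred' x hx').2) ha₀
              · exact hinj' hx' hy' hxy
          · -- left inverse
            intro S₁ h
            exact Finset.insert_erase (ex S₁ h).choose_spec.1
          · -- right inverse
            rintro ⟨t, S₁'⟩ hx
            rw [Finset.mem_product] at hx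
            simp only [Finset.mem_filter, Finset.mem_univ, true_and] at hx
            have hgt := hx.1.2
            have hpred' := hx.2.1
            have htS : t ∉ S₁' := fun h => ha₀ (hgt ▸ (hpred' t h).2)
            have hinj' := hx.2.2
            have htk := hx.1.1
            have hmem : insert t S₁' ∈ s.filter (fun S₁ => ∃ t ∈ S₁, g t = a₀) := by
              rw [Finset.mem_filter]
              refine ⟨?_, ⟨t, Finset.mem_insert_self t S₁', hgt⟩⟩
              rw [hs, Finset.mem_filter]
              refine ⟨Finset.mem_univ _, fun t' ht' => ?_, ?_⟩
              · rcases Finset.mem_insert.1 ht' with rfl | hh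
                · exact ⟨htk, by rw [hgt]; exact Finset.mem_insert_self a₀ A⟩
                · exact ⟨(hpred' t' hh).1, Finset.mem_insert_of_mem (hpred' t' hh).2⟩
              · rw [Finset.coe_insert]
                intro x hx' y hy' hxy
                rcases hx' with rfl | hx' <;> rcases hy' with rfl | hy'
                · rfl
                · exact absurd ((hxy.symm.trans hgt) ▸ (hpred' y hy').2) ha₀
                · exact absurd ((hxy.trans hgt) ▸ (hpred' x hx').2) ha₀
                · exact hinj' hx' hy' hxy
            show ((ex (insert t S₁') hmem).choose,
                (insert t S₁').erase (ex (insert t S₁') hmem).choose) = (t, S₁')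
            have hspec := (ex (insert t S₁') hmem).choose_spec
            have hteq : (ex (insert t S₁') hmem).choose = t := by
              rcases Finset.mem_insert.1 hspec.1 with h | h
              · exact h
              · exact absurd ((hspec.2) ▸ (hpred' _ h).2) ha₀
            rw [hteq, Finset.erase_insert htS]
          · -- value equality
            intro S₁ h
            obtain ⟨ht₀, hg₀⟩ := (ex S₁ h).choose_spec
            set t₀ := (ex S₁ h).choose
            have hPeq : (insert a₀ A).filter (fun a => ∀ t ∈ S₁, g t ≠ a)
                = A.filter (fun a => ∀ t ∈ S₁.erase t₀, g t ≠ a) := by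
              ext a
              simp only [Finset.mem_filter, Finset.mem_insert]
              constructor
              · rintro ⟨h1, h2⟩
                have hane : a ≠ a₀ := fun he => (h2 t₀ ht₀) (hg₀.trans he.symm)
                rcases h1 with h1 | h1
                · exact absurd h1 hane
                · exact ⟨h1, fun t ht => h2 t (Finset.mem_of_mem_erase ht)⟩
              · rintro ⟨h1, h2⟩
                refine ⟨Or.inr h1, fun t ht => ?_⟩
                by_cases hte : t = t₀
                · subst hte
                  exact fun he => ha₀ ((hg₀.symm.trans he) ▸ h1)
                · exact h2 t (Finset.mem_erase.2 ⟨hte, ht⟩)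
            rw [hPeq, ← Finset.mul_prod_erase S₁ p ht₀]
            ring
        rw [htrans, Finset.sum_product]
        trans ∑ x ∈ Finset.univ.filter (fun t : Fin n => ¬ ((t:ℕ) < k) ∧ g t = a₀),
            p x * ∏ a ∈ A, (1 - rho g p k a)
        · apply Finset.sum_congr rfl
          intro t _
          dsimp only
          rw [← Finset.mul_sum, IH]
        · rw [← Finset.sum_mul]
      rw [hmiss, hhit, Finset.prod_insert ha₀, rho_split g p k a₀]
      ring

lemma my_inner_sum {n m : ℕ} (g : Fin n → Fin m) (p : Fin n → ℝ) (i : Fin n)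
    (S₀ : Finset (Fin n)) (hS₀ : ∀ t ∈ S₀, (t:ℕ) ≤ (i:ℕ)) (hinj : Set.InjOn g ↑S₀) :
    ∑ S ∈ Finset.univ.filter (fun S : Finset (Fin n) =>
        Set.InjOn g ↑S ∧ S.filter (fun t : Fin n => (t : ℕ) ≤ (i : ℕ)) = S₀),
      worldProb g p S = worldProbI g p ((i : ℕ) + 1) S₀ := by
  set k := (i:ℕ) + 1 with hk
  have hle : ∀ t : Fin n, ((t:ℕ) ≤ (i:ℕ)) ↔ ((t:ℕ) < k) := fun t => (Nat.lt_succ_iff).symm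
  set A := Finset.univ.filter (fun a : Fin m => ∀ t ∈ S₀, g t ≠ a) with hA
  have hkey := key g p k A
  rw [worldProbI, ← hA, ← hkey, Finset.mul_sum]
  refine Finset.sum_bij' (fun (S : Finset (Fin n)) _ => S.filter (fun t : Fin n => ¬ ((t:ℕ) < k)))
    (fun (S₁ : Finset (Fin n)) _ => S₀ ∪ S₁) ?_ ?_ ?_ ?_ ?_
  · -- hi
    intro S hS
    simp only [Finset.mem_filter, Finset.mem_univ, true_and] at hS ⊢
    obtain ⟨hSinj, hfil⟩ := hS
    refine ⟨fun t ht => ?_, hSinj.mono (by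
      intro x hx
      simp only [Finset.coe_filter, Set.mem_setOf_eq] at hx
      exact hx.1)⟩
    refine ⟨ht.2, ?_⟩
    rw [hA, Finset.mem_filter]
    refine ⟨Finset.mem_univ _, fun t' ht' he => ?_⟩
    rw [← hfil, Finset.mem_filter] at ht'
    have heq : t' = t := hSinj (by exact ht'.1) (by exact ht.1) he
    rw [heq] at ht'
    exact ht.2 ((hle t).1 ht'.2)
  · -- hj
    intro S₁ hS₁
    simp only [Finset.mem_filter, Finset.mem_univ, true_and] at hS₁ ⊢
    obtain ⟨hpred, hinj₁⟩ := hS₁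
    have hgA : ∀ t ∈ S₁, ∀ t' ∈ S₀, g t' ≠ g t := by
      intro t ht t' ht'
      have h2 := (hpred t ht).2
      rw [hA, Finset.mem_filter] at h2
      exact h2.2 t' ht'
    constructor
    · rw [Finset.coe_union]
      intro x hx y hy hxy
      rcases hx with hx | hx <;> rcases hy with hy | hy
      · exact hinj hx hy hxy
      · exact absurd hxy (hgA y hy x hx)
      · exact absurd hxy.symm (hgA x hx y hy)
      · exact hinj₁ hx hy hxy
    · ext t
      rw [Finset.mem_filter, Finset.mem_union]
      constructor
      · rintro ⟨ht | ht, hle'⟩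
        · exact ht
        · exact absurd ((hle t).1 hle') (hpred t ht).1
      · intro ht
        exact ⟨Or.inl ht, hS₀ t ht⟩
  · -- left inverse
    intro S hS
    simp only [Finset.mem_filter, Finset.mem_univ, true_and] at hS
    obtain ⟨-, hfil⟩ := hS
    show S₀ ∪ S.filter (fun t : Fin n => ¬ ((t:ℕ) < k)) = S
    rw [← hfil]
    have h1 : S.filter (fun t : Fin n => (t:ℕ) ≤ (i:ℕ)) = S.filter (fun t : Fin n => (t:ℕ) < k) :=
      Finset.filter_congr (fun t _ => hle t)
    rw [h1, Finset.filter_union_filter_not_eq]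
  · -- right inverse
    intro S₁ hS₁
    simp only [Finset.mem_filter, Finset.mem_univ, true_and] at hS₁
    obtain ⟨hpred, -⟩ := hS₁
    show (S₀ ∪ S₁).filter (fun t : Fin n => ¬ ((t:ℕ) < k)) = S₁
    ext t
    rw [Finset.mem_filter, Finset.mem_union]
    constructor
    · rintro ⟨ht | ht, hnk⟩
      · exact absurd ((hle t).1 (hS₀ t ht)) hnk
      · exact ht
    · intro ht
      exact ⟨Or.inr ht, (hpred t ht).1⟩
  · -- values
    intro S hS
    simp only [Finset.mem_filter, Finset.mem_univ, true_and] at hS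
    obtain ⟨hSinj, hfil⟩ := hS
    have hfeq : S.filter (fun t : Fin n => (t:ℕ) < k) = S₀ := by
      rw [← hfil]
      exact Finset.filter_congr (fun t _ => (hle t).symm)
    have hprod : ∏ t ∈ S, p t
        = (∏ t ∈ S₀, p t) * ∏ t ∈ S.filter (fun t : Fin n => ¬ ((t:ℕ) < k)), p t := by
      rw [← Finset.prod_filter_mul_prod_filter_not S (fun t : Fin n => (t:ℕ) < k) p, hfeq]
    have hset : Finset.univ.filter (fun a : Fin m => ∀ t ∈ S, g t ≠ a)
        = A.filter (fun a => ∀ t ∈ S.filter (fun t : Fin n => ¬ ((t:ℕ) < k)), g t ≠ a) := by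
      rw [hA, Finset.filter_filter]
      apply Finset.filter_congr
      intro a _
      constructor
      · intro h
        refine ⟨fun t ht => h t ?_, fun t ht => h t (Finset.mem_of_mem_filter t ht)⟩
        rw [← hfil] at ht
        exact Finset.mem_of_mem_filter t ht
      · rintro ⟨h1, h2⟩ t ht
        by_cases hc : (t:ℕ) < k
        · exact h1 t (by rw [← hfil, Finset.mem_filter]; exact ⟨ht, (hle t).2 hc⟩)
        · exact h2 t (Finset.mem_filter.2 ⟨ht, hc⟩)
    show worldProb g p S = (∏ t ∈ S₀, p t) *
      ((∏ t ∈ S.filter (fun t : Fin n => ¬ ((t:ℕ) < k)), p t) *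
        ∏ a ∈ A.filter (fun a => ∀ t ∈ S.filter (fun t : Fin n => ¬ ((t:ℕ) < k)), g t ≠ a),
          (1 - ∑ t ∈ Finset.univ.filter (fun t : Fin n => g t = a), p t))
    rw [worldProb, hprod, hset, mul_assoc]

/-- The rank probability `p_{i,j}` is the same whether computed over the full
x-Relation or over the reduced relation on the top tuples `{t | t ≤ i}`.
Here `i : Fin n` is the (0-based) index of tuple `t_{i+1}`, so the reduced
relation consists of the tuples with index `≤ i`, i.e. the top `i+1` tuples. -/
theorem pij_eq_pij_reduced (n m : ℕ) (g : Fin n → Fin m) (p : Fin n → ℝ)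
    (hp : ∀ t, 0 ≤ p t)
    (hsum : ∀ a : Fin m, ∑ t ∈ Finset.univ.filter (fun t : Fin n => g t = a), p t ≤ 1)
    (i : Fin n) (j : ℕ) (hj : 1 ≤ j) :
    ∑ S ∈ Finset.univ.filter (fun S : Finset (Fin n) =>
        Set.InjOn g ↑S ∧ i ∈ S ∧ (S.filter (fun t => (t : ℕ) < (i : ℕ))).card = j - 1),
      worldProb g p S
      = ∑ S ∈ Finset.univ.filter (fun S : Finset (Fin n) =>
          (∀ t ∈ S, (t : ℕ) ≤ (i : ℕ)) ∧ Set.InjOn g ↑S ∧ i ∈ S ∧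
            (S.filter (fun t => (t : ℕ) < (i : ℕ))).card = j - 1),
        worldProbI g p ((i : ℕ) + 1) S := by
  have hbind : ∀ S : Finset (Fin n),
      (do let a ← S; pure ((a:ℕ)) : Finset ℕ) = S.image (fun t : Fin n => (t:ℕ)) := by
    intro S; ext x; simp [Bind.bind, Finset.mem_sup, Pure.pure]
  have hcard : ∀ S : Finset (Fin n),
      (Finset.filter (fun t : ℕ => t < (i:ℕ)) (do let a ← S; pure ((a:ℕ)))).card
        = (S.filter (fun t : Fin n => (t:ℕ) < (i:ℕ))).card := by
    intro S
    rw [hbind S, Finset.filter_image]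
    exact Finset.card_image_of_injective _ Fin.val_injective
  simp only [hcard]
  conv_rhs => rw [Finset.sum_filter]
  rw [← Finset.sum_fiberwise_of_maps_to (t := (Finset.univ : Finset (Finset (Fin n))))
    (g := fun S : Finset (Fin n) => S.filter (fun t : Fin n => (t:ℕ) ≤ (i:ℕ)))
    (fun S _ => Finset.mem_univ _) (worldProb g p)]
  apply Finset.sum_congr rfl
  intro S₀ _
  by_cases hQ : (∀ t ∈ S₀, (t:ℕ) ≤ (i:ℕ)) ∧ Set.InjOn g ↑S₀ ∧ i ∈ S₀ ∧
      (S₀.filter (fun t : Fin n => (t:ℕ) < (i:ℕ))).card = j - 1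
  · rw [if_pos hQ]
    obtain ⟨hall, hinjQ, hiQ, hcardQ⟩ := hQ
    have hidx : (Finset.univ.filter (fun S : Finset (Fin n) =>
          Set.InjOn g ↑S ∧ i ∈ S ∧
            (S.filter (fun t : Fin n => (t:ℕ) < (i:ℕ))).card = j - 1)).filter
          (fun S => S.filter (fun t : Fin n => (t:ℕ) ≤ (i:ℕ)) = S₀)
        = Finset.univ.filter (fun S : Finset (Fin n) =>
            Set.InjOn g ↑S ∧ S.filter (fun t : Fin n => (t:ℕ) ≤ (i:ℕ)) = S₀) := by
      ext S
      simp only [Finset.mem_filter, Finset.mem_univ, true_and]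
      constructor
      · rintro ⟨⟨h1, h2, h3⟩, h4⟩
        exact ⟨h1, h4⟩
      · rintro ⟨h1, h2⟩
        have hmemi : i ∈ S := by
          have hi0 : i ∈ S₀ := hiQ
          rw [← h2, Finset.mem_filter] at hi0
          exact hi0.1
        have hflt : S.filter (fun t : Fin n => (t:ℕ) < (i:ℕ))
            = S₀.filter (fun t : Fin n => (t:ℕ) < (i:ℕ)) := by
          rw [← h2, Finset.filter_filter]
          apply Finset.filter_congr
          intro t _
          constructor
          · intro h; exact ⟨le_of_lt h, h⟩
          · rintro ⟨-, h⟩; exact h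
        refine ⟨⟨h1, hmemi, ?_⟩, h2⟩
        rw [hflt]
        exact hcardQ
    rw [hidx]
    exact my_inner_sum g p i S₀ hall hinjQ
  · rw [if_neg hQ]
    apply Finset.sum_eq_zero
    intro S hS
    exfalso
    apply hQ
    simp only [Finset.mem_filter, Finset.mem_univ, true_and] at hS
    obtain ⟨⟨h1, h2, h3⟩, h4⟩ := hS
    have hall : ∀ t ∈ S₀, (t:ℕ) ≤ (i:ℕ) := by
      intro t ht
      rw [← h4, Finset.mem_filter] at ht
      exact ht.2
    have hsub : S₀ ⊆ S := by
      rw [← h4]; exact Finset.filter_subset _ _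
    have hflt : S.filter (fun t : Fin n => (t:ℕ) < (i:ℕ))
        = S₀.filter (fun t : Fin n => (t:ℕ) < (i:ℕ)) := by
      rw [← h4, Finset.filter_filter]
      apply Finset.filter_congr
      intro t _
      constructor
      · intro h; exact ⟨le_of_lt h, h⟩
      · rintro ⟨-, h⟩; exact h
    refine ⟨hall, h1.mono ?_, ?_, ?_⟩
    · exact_mod_cast hsub
    · rw [← h4, Finset.mem_filter]
      exact ⟨h2, le_refl _⟩
    · rw [← hflt]
      exact h3
end

section
/- In the general multi-alternative case, the rank probability of tuple t_i factors through the conditional count distribution that excludes t_i's own x-tuple: for all 1 ≤ i ≤ n and j ≥ 1, p_{i,j} = p(i) · c^{g(i)}_{i−1,j−1}, where c^{g(i)}_{i−1,j−1} is the Poisson-binomial probability of exactly j−1 successes among the x-tuples a ≠ g(i) with success probabilities ρ_{i−1}(a). -/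
open Finset
open scoped Classical

lemma pb_zero {α : Type*} [DecidableEq α] (A : Finset α) (q r : α → ℝ) :
    ∑ T ∈ A.powersetCard 0, (∏ a ∈ T, q a) * ∏ a ∈ A \ T, r a = ∏ a ∈ A, r a := by
  rw [powersetCard_zero, Finset.sum_singleton, Finset.prod_empty, Finset.sdiff_empty, one_mul]

lemma pb_expand {α : Type*} [DecidableEq α] {A : Finset α} {a0 : α} (ha0 : a0 ∈ A)
    (q r : α → ℝ) (k : ℕ) :
    ∑ T ∈ A.powersetCard (k+1), (∏ a ∈ T, q a) * ∏ a ∈ A \ T, r a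
    = q a0 * (∑ T ∈ (A.erase a0).powersetCard k,
        (∏ a ∈ T, q a) * ∏ a ∈ (A.erase a0) \ T, r a)
    + r a0 * (∑ T ∈ (A.erase a0).powersetCard (k+1),
        (∏ a ∈ T, q a) * ∏ a ∈ (A.erase a0) \ T, r a) := by
  have hins : A = insert a0 (A.erase a0) := (Finset.insert_erase ha0).symm
  have hnot : a0 ∉ A.erase a0 := Finset.notMem_erase _ _
  conv_lhs => rw [hins]
  rw [Finset.powersetCard_succ_insert hnot, Finset.sum_union, Finset.sum_image]
  · rw [add_comm]
    congr 1
    · -- image part : T = insert a0 T'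
      rw [Finset.mul_sum]
      refine Finset.sum_congr rfl fun T hT => ?_
      have hTsub : T ⊆ A.erase a0 := (Finset.mem_powersetCard.mp hT).1
      have ha0T : a0 ∉ T := fun h => hnot (hTsub h)
      rw [Finset.prod_insert ha0T]
      have : insert a0 (A.erase a0) \ insert a0 T = (A.erase a0) \ T := by
        ext x
        simp only [Finset.mem_sdiff, Finset.mem_insert, Finset.mem_erase]
        constructor
        · rintro ⟨hx | hx, hx2⟩
          · exact absurd (Or.inl hx) hx2
          · exact ⟨hx, fun h => hx2 (Or.inr h)⟩
        · rintro ⟨hx, hx2⟩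
          exact ⟨Or.inr hx, fun h => h.elim (fun h' => hx.1 h') hx2⟩
      rw [this]; ring
    · -- non-a0 part
      rw [Finset.mul_sum]
      refine Finset.sum_congr rfl fun T hT => ?_
      have hTsub : T ⊆ A.erase a0 := (Finset.mem_powersetCard.mp hT).1
      have ha0T : a0 ∉ T := fun h => hnot (hTsub h)
      have : insert a0 (A.erase a0) \ T = insert a0 ((A.erase a0) \ T) := by
        rw [Finset.insert_sdiff_of_notMem _ ha0T]
      rw [this, Finset.prod_insert (by simp [hnot])]
      ring
  · -- injectivity of insert a0 on powersetCard k
    intro x hx y hy hxy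
    have hx' : a0 ∉ x := fun h => hnot ((Finset.mem_powersetCard.mp hx).1 h)
    have hy' : a0 ∉ y := fun h => hnot ((Finset.mem_powersetCard.mp hy).1 h)
    have := congrArg (Finset.erase · a0) hxy
    simpa [Finset.erase_insert hx', Finset.erase_insert hy'] using this
  · -- disjoint
    rw [Finset.disjoint_left]
    intro T hT hT'
    have : a0 ∉ T := fun h => hnot ((Finset.mem_powersetCard.mp hT).1 h)
    obtain ⟨T', _, rfl⟩ := Finset.mem_image.mp hT'
    exact this (Finset.mem_insert_self _ _)


section Key
variable {n m : ℕ} (g : Fin n → Fin m) (p : Fin n → ℝ) (v : Fin m → ℝ) (L : Finset (Fin n))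

noncomputable def lhsSum (D : Finset (Fin n)) (A : Finset (Fin m)) (k : ℕ) : ℝ :=
  ∑ S ∈ D.powerset.filter (fun S : Finset (Fin n) =>
      Set.InjOn g ↑S ∧ (∀ t ∈ S, g t ∈ A) ∧ (S ∩ L).card = k),
    (∏ t ∈ S, p t) * ∏ a ∈ A \ S.image g, v a

noncomputable def s1 (D : Finset (Fin n)) (a : Fin m) : ℝ :=
  ∑ t ∈ (D ∩ L).filter (fun t => g t = a), p t

noncomputable def s0 (D : Finset (Fin n)) (a : Fin m) : ℝ :=
  v a + ∑ t ∈ (D \ L).filter (fun t => g t = a), p t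

noncomputable def rhsSum (D : Finset (Fin n)) (A : Finset (Fin m)) (k : ℕ) : ℝ :=
  ∑ T ∈ A.powersetCard k,
    (∏ a ∈ T, s1 g p L D a) * ∏ a ∈ A \ T, s0 g p v L D a

end Key

section Key2
variable {n m : ℕ} (g : Fin n → Fin m) (p : Fin n → ℝ) (v : Fin m → ℝ) (L : Finset (Fin n))

lemma s1_insert_ne {t : Fin n} {a : Fin m} (h : g t ≠ a) (D : Finset (Fin n)) :
    s1 g p L (insert t D) a = s1 g p L D a := by
  unfold s1
  refine Finset.sum_congr ?_ (fun _ _ => rfl)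
  ext u
  simp only [Finset.mem_filter, Finset.mem_inter, Finset.mem_insert]
  constructor
  · rintro ⟨⟨hu | hu, hL⟩, hg⟩
    · exact absurd (hu ▸ hg) h
    · exact ⟨⟨hu, hL⟩, hg⟩
  · rintro ⟨⟨hu, hL⟩, hg⟩; exact ⟨⟨Or.inr hu, hL⟩, hg⟩

lemma s0_insert_ne {t : Fin n} {a : Fin m} (h : g t ≠ a) (D : Finset (Fin n)) :
    s0 g p v L (insert t D) a = s0 g p v L D a := by
  unfold s0
  congr 1
  refine Finset.sum_congr ?_ (fun _ _ => rfl)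
  ext u
  simp only [Finset.mem_filter, Finset.mem_sdiff, Finset.mem_insert]
  constructor
  · rintro ⟨⟨hu | hu, hL⟩, hg⟩
    · exact absurd (hu ▸ hg) h
    · exact ⟨⟨hu, hL⟩, hg⟩
  · rintro ⟨⟨hu, hL⟩, hg⟩; exact ⟨⟨Or.inr hu, hL⟩, hg⟩

lemma s1_insert_self {t : Fin n} {D : Finset (Fin n)} (ht : t ∉ D) :
    s1 g p L (insert t D) (g t) = (if t ∈ L then p t else 0) + s1 g p L D (g t) := by
  unfold s1
  by_cases hL : t ∈ L
  · rw [if_pos hL]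
    have hset : ((insert t D) ∩ L).filter (fun u => g u = g t)
        = insert t ((D ∩ L).filter (fun u => g u = g t)) := by
      ext u
      simp only [Finset.mem_filter, Finset.mem_inter, Finset.mem_insert]
      constructor
      · rintro ⟨⟨hu | hu, hL'⟩, hg⟩
        · exact Or.inl hu
        · exact Or.inr ⟨⟨hu, hL'⟩, hg⟩
      · rintro (rfl | ⟨⟨hu, hL'⟩, hg⟩)
        · exact ⟨⟨Or.inl rfl, hL⟩, rfl⟩
        · exact ⟨⟨Or.inr hu, hL'⟩, hg⟩
    rw [hset, Finset.sum_insert (by simp [Finset.mem_filter, Finset.mem_inter, ht])]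
  · rw [if_neg hL, zero_add]
    refine Finset.sum_congr ?_ (fun _ _ => rfl)
    ext u
    simp only [Finset.mem_filter, Finset.mem_inter, Finset.mem_insert]
    constructor
    · rintro ⟨⟨hu | hu, hL'⟩, hg⟩
      · exact absurd (hu ▸ hL') hL
      · exact ⟨⟨hu, hL'⟩, hg⟩
    · rintro ⟨⟨hu, hL'⟩, hg⟩; exact ⟨⟨Or.inr hu, hL'⟩, hg⟩

lemma s0_insert_self {t : Fin n} {D : Finset (Fin n)} (ht : t ∉ D) :
    s0 g p v L (insert t D) (g t) = (if t ∈ L then 0 else p t) + s0 g p v L D (g t) := by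
  unfold s0
  by_cases hL : t ∈ L
  · rw [if_pos hL, zero_add]
    congr 1
    refine Finset.sum_congr ?_ (fun _ _ => rfl)
    ext u
    simp only [Finset.mem_filter, Finset.mem_sdiff, Finset.mem_insert]
    constructor
    · rintro ⟨⟨hu | hu, hL'⟩, hg⟩
      · exact absurd hL (hu ▸ hL')
      · exact ⟨⟨hu, hL'⟩, hg⟩
    · rintro ⟨⟨hu, hL'⟩, hg⟩; exact ⟨⟨Or.inr hu, hL'⟩, hg⟩
  · rw [if_neg hL]
    have hset : ((insert t D) \ L).filter (fun u => g u = g t)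
        = insert t ((D \ L).filter (fun u => g u = g t)) := by
      ext u
      simp only [Finset.mem_filter, Finset.mem_sdiff, Finset.mem_insert]
      constructor
      · rintro ⟨⟨hu | hu, hL'⟩, hg⟩
        · exact Or.inl hu
        · exact Or.inr ⟨⟨hu, hL'⟩, hg⟩
      · rintro (rfl | ⟨⟨hu, hL'⟩, hg⟩)
        · exact ⟨⟨Or.inl rfl, hL⟩, rfl⟩
        · exact ⟨⟨Or.inr hu, hL'⟩, hg⟩
    rw [hset, Finset.sum_insert (by simp [Finset.mem_filter, Finset.mem_sdiff, ht])]
    ring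

lemma rhs_agree {t : Fin n} {A : Finset (Fin m)} (hA : g t ∉ A) (D : Finset (Fin n)) (k : ℕ) :
    rhsSum g p v L (insert t D) A k = rhsSum g p v L D A k := by
  unfold rhsSum
  refine Finset.sum_congr rfl fun T hT => ?_
  have hTsub : T ⊆ A := (Finset.mem_powersetCard.mp hT).1
  congr 1
  · exact Finset.prod_congr rfl fun a ha =>
      s1_insert_ne g p L (fun h => hA (h ▸ hTsub ha)) D
  · exact Finset.prod_congr rfl fun a ha =>
      s0_insert_ne g p v L (fun h => hA (h ▸ (Finset.mem_sdiff.mp ha).1)) D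

end Key2

section Key3
variable {n m : ℕ} (g : Fin n → Fin m) (p : Fin n → ℝ) (v : Fin m → ℝ) (L : Finset (Fin n))

lemma rhs_zero (D : Finset (Fin n)) (A : Finset (Fin m)) :
    rhsSum g p v L D A 0 = ∏ a ∈ A, s0 g p v L D a := by
  unfold rhsSum; exact pb_zero A _ _

lemma rhs_erase_agree {t : Fin n} {A : Finset (Fin m)} (D : Finset (Fin n)) (k : ℕ) :
    rhsSum g p v L (insert t D) (A.erase (g t)) k = rhsSum g p v L D (A.erase (g t)) k :=
  rhs_agree g p v L (Finset.notMem_erase _ _) D k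

lemma rhs_insert_mem_zero {t : Fin n} {D : Finset (Fin n)} {A : Finset (Fin m)}
    (ht : t ∉ D) (hA : g t ∈ A) :
    rhsSum g p v L (insert t D) A 0
      = rhsSum g p v L D A 0
        + (if t ∈ L then 0 else p t * rhsSum g p v L D (A.erase (g t)) 0) := by
  rw [rhs_zero, rhs_zero, rhs_zero]
  rw [← Finset.mul_prod_erase A _ hA, ← Finset.mul_prod_erase A (s0 g p v L D) hA]
  have h1 : ∏ a ∈ A.erase (g t), s0 g p v L (insert t D) a
      = ∏ a ∈ A.erase (g t), s0 g p v L D a :=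
    Finset.prod_congr rfl fun a ha =>
      s0_insert_ne g p v L (fun h => (Finset.mem_erase.mp ha).1 h.symm) D
  rw [h1, s0_insert_self g p v L ht]
  by_cases hL : t ∈ L <;> simp [hL] <;> ring

lemma rhs_insert_mem_succ {t : Fin n} {D : Finset (Fin n)} {A : Finset (Fin m)}
    (ht : t ∉ D) (hA : g t ∈ A) (k : ℕ) :
    rhsSum g p v L (insert t D) A (k+1)
      = rhsSum g p v L D A (k+1)
        + (if t ∈ L then p t * rhsSum g p v L D (A.erase (g t)) k
           else p t * rhsSum g p v L D (A.erase (g t)) (k+1)) := by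
  have hexp1 := pb_expand hA (s1 g p L (insert t D)) (s0 g p v L (insert t D)) k
  have hexp2 := pb_expand hA (s1 g p L D) (s0 g p v L D) k
  have hagree : ∀ k' : ℕ,
      ∑ T ∈ (A.erase (g t)).powersetCard k',
        (∏ a ∈ T, s1 g p L (insert t D) a) * ∏ a ∈ (A.erase (g t)) \ T,
          s0 g p v L (insert t D) a
      = rhsSum g p v L D (A.erase (g t)) k' := by
    intro k'
    have := rhs_erase_agree g p v L (t := t) (A := A) D k'
    rw [← this]; rfl
  unfold rhsSum
  rw [hexp1, hexp2, hagree, hagree]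
  have e1 : (∑ T ∈ (A.erase (g t)).powersetCard k,
      (∏ a ∈ T, s1 g p L D a) * ∏ a ∈ (A.erase (g t)) \ T, s0 g p v L D a)
      = rhsSum g p v L D (A.erase (g t)) k := rfl
  have e2 : (∑ T ∈ (A.erase (g t)).powersetCard (k+1),
      (∏ a ∈ T, s1 g p L D a) * ∏ a ∈ (A.erase (g t)) \ T, s0 g p v L D a)
      = rhsSum g p v L D (A.erase (g t)) (k+1) := rfl
  rw [e1, e2, s1_insert_self g p L ht, s0_insert_self g p v L ht]
  by_cases hL : t ∈ L <;> simp [hL] <;> ring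

end Key3

section Key4
variable {n m : ℕ} (g : Fin n → Fin m) (p : Fin n → ℝ) (v : Fin m → ℝ) (L : Finset (Fin n))

lemma lhs_split {t : Fin n} {D : Finset (Fin n)} (ht : t ∉ D) (A : Finset (Fin m)) (k : ℕ) :
    lhsSum g p v L (insert t D) A k
      = lhsSum g p v L D A k
        + ∑ S ∈ (insert t D).powerset.filter (fun S : Finset (Fin n) =>
            (Set.InjOn g ↑S ∧ (∀ u ∈ S, g u ∈ A) ∧ (S ∩ L).card = k) ∧ t ∈ S),
          (∏ u ∈ S, p u) * ∏ a ∈ A \ S.image g, v a := by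
  unfold lhsSum
  rw [← Finset.sum_filter_add_sum_filter_not
    ((insert t D).powerset.filter (fun S : Finset (Fin n) =>
      Set.InjOn g ↑S ∧ (∀ u ∈ S, g u ∈ A) ∧ (S ∩ L).card = k)) (fun S => t ∈ S)]
  rw [add_comm]
  congr 1
  · refine Finset.sum_congr ?_ (fun _ _ => rfl)
    rw [Finset.filter_filter]
    ext S
    simp only [Finset.mem_filter, Finset.mem_powerset]
    constructor
    · rintro ⟨hsub, hc, hts⟩
      refine ⟨fun u hu => ?_, hc⟩
      rcases Finset.mem_insert.mp (hsub hu) with rfl | h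
      · exact absurd hu hts
      · exact h
    · rintro ⟨hsub, hc⟩
      exact ⟨hsub.trans (Finset.subset_insert _ _), hc, fun hts => ht (hsub hts)⟩
  · refine Finset.sum_congr ?_ (fun _ _ => rfl)
    rw [Finset.filter_filter]

lemma lhs_part {t : Fin n} {D : Finset (Fin n)} {A : Finset (Fin m)}
    (ht : t ∉ D) (hA : g t ∈ A) (k : ℕ) :
    ∑ S ∈ (insert t D).powerset.filter (fun S : Finset (Fin n) =>
        (Set.InjOn g ↑S ∧ (∀ u ∈ S, g u ∈ A) ∧ (S ∩ L).card = k) ∧ t ∈ S),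
      (∏ u ∈ S, p u) * ∏ a ∈ A \ S.image g, v a
    = p t * ∑ S' ∈ D.powerset.filter (fun S' : Finset (Fin n) =>
        Set.InjOn g ↑S' ∧ (∀ u ∈ S', g u ∈ A.erase (g t))
          ∧ (((insert t S') ∩ L).card = k)),
      (∏ u ∈ S', p u) * ∏ a ∈ (A.erase (g t)) \ S'.image g, v a := by
  rw [Finset.mul_sum]
  refine Finset.sum_bij' (fun S _ => S.erase t) (fun S' _ => insert t S') ?_ ?_ ?_ ?_ ?_
  · -- hi
    intro S hS
    simp only [Finset.mem_filter, Finset.mem_powerset] at hS ⊢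
    obtain ⟨hsub, ⟨hinj, hAmem, hcard⟩, htS⟩ := hS
    refine ⟨?_, ?_, ?_, ?_⟩
    · intro u hu
      have := hsub (Finset.mem_of_mem_erase hu)
      rcases Finset.mem_insert.mp this with rfl | h
      · exact absurd rfl (Finset.mem_erase.mp hu).1
      · exact h
    · exact hinj.mono (by simpa using Finset.erase_subset t S)
    · intro u hu
      obtain ⟨hut, huS⟩ := Finset.mem_erase.mp hu
      refine Finset.mem_erase.mpr ⟨fun h => hut (hinj huS htS h), hAmem u huS⟩
    · rw [Finset.insert_erase htS]; exact hcard
  · -- hj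
    intro S' hS'
    simp only [Finset.mem_filter, Finset.mem_powerset] at hS' ⊢
    obtain ⟨hsub, hinj, hAmem, hcard⟩ := hS'
    have htS' : t ∉ S' := fun h => ht (hsub h)
    refine ⟨Finset.insert_subset_insert _ hsub, ⟨?_, ?_, hcard⟩, Finset.mem_insert_self _ _⟩
    · rw [Finset.coe_insert]
      refine (Set.injOn_insert (by simpa using htS')).mpr ⟨hinj, ?_⟩
      rintro ⟨u, huS, hgu⟩
      exact (Finset.mem_erase.mp (hAmem u (by simpa using huS))).1 hgu
    · intro u hu
      rcases Finset.mem_insert.mp hu with rfl | h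
      · exact hA
      · exact Finset.mem_of_mem_erase (hAmem u h)
  · intro S hS
    exact Finset.insert_erase (Finset.mem_filter.mp hS).2.2
  · intro S' hS'
    refine Finset.erase_insert ?_
    intro h
    exact ht ((Finset.mem_powerset.mp (Finset.mem_filter.mp hS').1) h)
  · -- values
    intro S hS
    simp only [Finset.mem_filter, Finset.mem_powerset] at hS
    obtain ⟨hsub, ⟨hinj, hAmem, hcard⟩, htS⟩ := hS
    have himg : A \ S.image g = (A.erase (g t)) \ ((S.erase t).image g) := by
      ext a
      simp only [Finset.mem_sdiff, Finset.mem_erase]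
      constructor
      · rintro ⟨haA, hnim⟩
        refine ⟨⟨?_, haA⟩, ?_⟩
        · intro h; exact hnim (Finset.mem_image.mpr ⟨t, htS, h.symm⟩)
        · intro h
          obtain ⟨u, hu, hgu⟩ := Finset.mem_image.mp h
          exact hnim (Finset.mem_image.mpr ⟨u, Finset.mem_of_mem_erase hu, hgu⟩)
      · rintro ⟨⟨hat, haA⟩, hnim⟩
        refine ⟨haA, fun h => ?_⟩
        obtain ⟨u, hu, hgu⟩ := Finset.mem_image.mp h
        by_cases hut : u = t
        · exact hat (hut ▸ hgu).symm
        · exact hnim (Finset.mem_image.mpr ⟨u, Finset.mem_erase.mpr ⟨hut, hu⟩, hgu⟩)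
    rw [himg, ← Finset.mul_prod_erase S p htS, mul_assoc]

end Key4

section Key5
variable {n m : ℕ} (g : Fin n → Fin m) (p : Fin n → ℝ) (v : Fin m → ℝ) (L : Finset (Fin n))

theorem keyLemma (D : Finset (Fin n)) : ∀ (A : Finset (Fin m)) (k : ℕ),
    lhsSum g p v L D A k = rhsSum g p v L D A k := by
  induction D using Finset.induction_on with
  | empty =>
    intro A k
    unfold lhsSum
    rw [Finset.powerset_empty]
    cases k with
    | zero =>
      rw [rhs_zero]
      have hfil : ({∅} : Finset (Finset (Fin n))).filter (fun S : Finset (Fin n) =>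
          Set.InjOn g ↑S ∧ (∀ t ∈ S, g t ∈ A) ∧ (S ∩ L).card = 0) = {∅} := by
        rw [Finset.filter_singleton, if_pos]
        refine ⟨by simp, by simp, by simp⟩
      rw [hfil, Finset.sum_singleton]
      simp [s0]
    | succ k =>
      have hfil : ({∅} : Finset (Finset (Fin n))).filter (fun S : Finset (Fin n) =>
          Set.InjOn g ↑S ∧ (∀ t ∈ S, g t ∈ A) ∧ (S ∩ L).card = k + 1) = ∅ := by
        rw [Finset.filter_singleton, if_neg]
        simp
      rw [hfil, Finset.sum_empty]
      unfold rhsSum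
      refine (Finset.sum_eq_zero fun T hT => ?_).symm
      obtain ⟨hTsub, hTcard⟩ := Finset.mem_powersetCard.mp hT
      obtain ⟨a, ha⟩ := Finset.card_pos.mp (by omega : 0 < T.card)
      rw [Finset.prod_eq_zero ha (by simp [s1]), zero_mul]
  | @insert t D ht ih =>
    intro A k
    by_cases hA : g t ∈ A
    · rw [lhs_split g p v L ht A k, lhs_part g p v L ht hA k, ih]
      by_cases hL : t ∈ L
      · cases k with
        | zero =>
          rw [rhs_insert_mem_zero g p v L ht hA, if_pos hL]
          have hfil : (D.powerset.filter (fun S' : Finset (Fin n) =>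
              Set.InjOn g ↑S' ∧ (∀ u ∈ S', g u ∈ A.erase (g t))
                ∧ (((insert t S') ∩ L).card = 0))) = ∅ := by
            refine Finset.filter_false_of_mem fun S' hS' => ?_
            rintro ⟨-, -, hc⟩
            have : t ∈ (insert t S') ∩ L :=
              Finset.mem_inter.mpr ⟨Finset.mem_insert_self _ _, hL⟩
            rw [Finset.card_eq_zero.mp hc] at this
            exact absurd this (Finset.notMem_empty t)
          rw [hfil, Finset.sum_empty, mul_zero]
        | succ k =>
          have hconv : (∑ S' ∈ D.powerset.filter (fun S' : Finset (Fin n) =>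
              Set.InjOn g ↑S' ∧ (∀ u ∈ S', g u ∈ A.erase (g t))
                ∧ (((insert t S') ∩ L).card = k + 1)),
              (∏ u ∈ S', p u) * ∏ a ∈ (A.erase (g t)) \ S'.image g, v a)
              = lhsSum g p v L D (A.erase (g t)) k := by
            unfold lhsSum
            refine Finset.sum_congr ?_ (fun _ _ => rfl)
            refine Finset.filter_congr fun S' hS' => ?_
            have htS' : t ∉ S' := fun h => ht (Finset.mem_powerset.mp hS' h)
            have hins : (insert t S') ∩ L = insert t (S' ∩ L) :=
              Finset.insert_inter_of_mem hL
            rw [hins, Finset.card_insert_of_notMem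
              (fun h => htS' (Finset.mem_inter.mp h).1), Nat.add_right_cancel_iff]
          rw [hconv, ih, rhs_insert_mem_succ g p v L ht hA, if_pos hL]
      · have hconv : (∑ S' ∈ D.powerset.filter (fun S' : Finset (Fin n) =>
            Set.InjOn g ↑S' ∧ (∀ u ∈ S', g u ∈ A.erase (g t))
              ∧ (((insert t S') ∩ L).card = k)),
            (∏ u ∈ S', p u) * ∏ a ∈ (A.erase (g t)) \ S'.image g, v a)
            = lhsSum g p v L D (A.erase (g t)) k := by
          unfold lhsSum
          refine Finset.sum_congr ?_ (fun _ _ => rfl)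
          refine Finset.filter_congr fun S' hS' => ?_
          have hins : (insert t S') ∩ L = S' ∩ L := by
            ext u
            simp only [Finset.mem_inter, Finset.mem_insert]
            constructor
            · rintro ⟨rfl | hu, hL'⟩
              · exact absurd hL' hL
              · exact ⟨hu, hL'⟩
            · rintro ⟨hu, hL'⟩; exact ⟨Or.inr hu, hL'⟩
          rw [hins]
        rw [hconv, ih]
        cases k with
        | zero => rw [rhs_insert_mem_zero g p v L ht hA, if_neg hL]
        | succ k => rw [rhs_insert_mem_succ g p v L ht hA, if_neg hL]
    · have hpart : ((insert t D).powerset.filter (fun S : Finset (Fin n) =>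
          (Set.InjOn g ↑S ∧ (∀ u ∈ S, g u ∈ A) ∧ (S ∩ L).card = k) ∧ t ∈ S)) = ∅ := by
        refine Finset.filter_false_of_mem fun S hS => ?_
        rintro ⟨⟨-, hmem, -⟩, htS⟩
        exact hA (hmem t htS)
      rw [lhs_split g p v L ht A k, hpart, Finset.sum_empty, add_zero, ih,
        rhs_agree g p v L hA]
end Key5

lemma card_coe_filter (n : ℕ) (i : Fin n) (S : Finset (Fin n)) :
    (S.filter (fun t => (t : ℕ) < (i : ℕ))).card
      = (S.filter (fun t : Fin n => (t : ℕ) < (i : ℕ))).card := by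
  simp only [pure_def, bind_def, sup_singleton_apply, Fin.val_fin_lt]
  refine (Finset.card_bij (fun (t : Fin n) _ => (t : ℕ)) ?_ ?_ ?_).symm
  · intro t ht
    simp only [Finset.mem_filter, Finset.mem_image] at ht ⊢
    exact ⟨⟨t, ht.1, rfl⟩, ht.2⟩
  · intro a ha b hb hab
    exact Fin.val_injective hab
  · intro a ha
    simp only [Finset.mem_filter, Finset.mem_image] at ha
    obtain ⟨⟨t, htS, rfl⟩, hlt⟩ := ha
    refine ⟨t, ?_, rfl⟩
    simp only [Finset.mem_filter]
    exact ⟨htS, hlt⟩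

/-- General multi-alternative case: the rank probability of tuple `i` at position
`j` factors as `p i` times the conditional count probability `c_{i-1,j-1}`, the
Poisson-binomial probability of exactly `j-1` successes among the x-tuples
`a ≠ g i`, with success probabilities `ρ_{i-1} a` (projected to the tuples of
score higher than tuple `i`). -/
theorem pij_eq_mul_condProb (n m : ℕ) (g : Fin n → Fin m) (p : Fin n → ℝ)
    (hp : ∀ t, 0 ≤ p t)
    (hsum : ∀ a : Fin m, ∑ t ∈ Finset.univ.filter (fun t : Fin n => g t = a), p t ≤ 1)
    (i : Fin n) (j : ℕ) (hj : 1 ≤ j) :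
    pij g p i j
      = p i * PB (Finset.univ.erase (g i)) (rho g p (i : ℕ)) (j - 1) := by
  classical
  set A : Finset (Fin m) := Finset.univ.erase (g i) with hAdef
  set L : Finset (Fin n) := Finset.univ.filter (fun t : Fin n => (t : ℕ) < (i : ℕ)) with hLdef
  set v : Fin m → ℝ :=
    fun a => 1 - ∑ t ∈ Finset.univ.filter (fun t : Fin n => g t = a), p t with hvdef
  have hiL : i ∉ L := by simp [hLdef]
  -- Step 1 : pij = p i * lhsSum
  have step1 : pij g p i j = p i * lhsSum g p v L Finset.univ A (j - 1) := by
    unfold pij lhsSum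
    rw [Finset.mul_sum]
    refine Finset.sum_bij' (fun S _ => S.erase i) (fun S' _ => insert i S') ?_ ?_ ?_ ?_ ?_
    · intro S hS
      simp only [Finset.mem_filter, Finset.mem_univ, true_and] at hS
      obtain ⟨hinj, hiS, hcard⟩ := hS
      simp only [Finset.mem_filter, Finset.mem_powerset]
      refine ⟨Finset.subset_univ _, hinj.mono (by simpa using Finset.erase_subset i S), ?_, ?_⟩
      · intro u hu
        obtain ⟨hui, huS⟩ := Finset.mem_erase.mp hu
        exact Finset.mem_erase.mpr ⟨fun h => hui (hinj huS hiS h), Finset.mem_univ _⟩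
      · have : S.erase i ∩ L = S.filter (fun t : Fin n => (t : ℕ) < (i : ℕ)) := by
          ext u
          simp only [Finset.mem_inter, Finset.mem_erase, Finset.mem_filter, hLdef,
            Finset.mem_univ, true_and]
          constructor
          · rintro ⟨⟨hui, huS⟩, hlt⟩; exact ⟨huS, hlt⟩
          · rintro ⟨huS, hlt⟩
            exact ⟨⟨fun h => by simp [h] at hlt, huS⟩, hlt⟩
        rw [this, ← card_coe_filter n i S]
        exact hcard
    · intro S' hS'
      simp only [Finset.mem_filter, Finset.mem_powerset] at hS'
      obtain ⟨hsub, hinj, hAmem, hcard⟩ := hS'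
      have hiS' : i ∉ S' := fun h => by
        have := hAmem i h
        simp [hAdef] at this
      simp only [Finset.mem_filter, Finset.mem_univ, true_and]
      refine ⟨?_, Finset.mem_insert_self _ _, ?_⟩
      · rw [Finset.coe_insert]
        refine (Set.injOn_insert (by simpa using hiS')).mpr ⟨hinj, ?_⟩
        rintro ⟨u, huS, hgu⟩
        have := hAmem u (by simpa using huS)
        simp [hAdef, hgu] at this
      · have : (insert i S').filter (fun t : Fin n => (t : ℕ) < (i : ℕ)) = S' ∩ L := by
          ext u
          simp only [Finset.mem_filter, Finset.mem_insert, Finset.mem_inter, hLdef,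
            Finset.mem_univ, true_and]
          constructor
          · rintro ⟨rfl | huS, hlt⟩
            · omega
            · exact ⟨huS, hlt⟩
          · rintro ⟨huS, hlt⟩; exact ⟨Or.inr huS, hlt⟩
        rw [card_coe_filter n i (insert i S'), this]
        exact hcard
    · intro S hS
      exact Finset.insert_erase (Finset.mem_filter.mp hS).2.2.1
    · intro S' hS'
      refine Finset.erase_insert fun h => ?_
      simp only [Finset.mem_filter, Finset.mem_powerset] at hS'
      have := hS'.2.2.1 i h
      simp [hAdef] at this
    · intro S hS
      simp only [Finset.mem_filter, Finset.mem_univ, true_and] at hS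
      obtain ⟨hinj, hiS, hcard⟩ := hS
      unfold worldProb
      have himg : Finset.univ.filter (fun a : Fin m => ∀ t ∈ S, g t ≠ a)
          = A \ (S.erase i).image g := by
        ext a
        simp only [Finset.mem_filter, Finset.mem_univ, true_and, Finset.mem_sdiff,
          hAdef, Finset.mem_erase]
        constructor
        · intro h
          refine ⟨⟨fun he => h i hiS he.symm, trivial⟩, fun hin => ?_⟩
          obtain ⟨u, hu, hgu⟩ := Finset.mem_image.mp hin
          exact h u (Finset.mem_of_mem_erase hu) hgu
        · rintro ⟨⟨hne, -⟩, hnin⟩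
          intro u huS hgu
          rcases eq_or_ne u i with rfl | hui
          · exact hne hgu.symm
          · exact hnin (Finset.mem_image.mpr ⟨u, Finset.mem_erase.mpr ⟨hui, huS⟩, hgu⟩)
      rw [himg, ← Finset.mul_prod_erase S p hiS, mul_assoc]
  rw [step1, keyLemma]
  congr 1
  -- Step 2 : rhsSum = PB
  unfold rhsSum PB
  refine Finset.sum_congr rfl fun T hT => ?_
  have hs1 : ∀ a : Fin m, s1 g p L Finset.univ a = rho g p (i : ℕ) a := by
    intro a
    unfold s1 rho
    refine Finset.sum_congr ?_ (fun _ _ => rfl)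
    ext u
    simp [hLdef, and_comm]
  have hs0 : ∀ a : Fin m, s0 g p v L Finset.univ a = 1 - rho g p (i : ℕ) a := by
    intro a
    unfold s0 rho
    have hva : v a = 1 - ∑ t ∈ Finset.univ.filter (fun t : Fin n => g t = a), p t := rfl
    have hsplit : ∑ t ∈ Finset.univ.filter (fun t : Fin n => g t = a), p t
        = (∑ t ∈ Finset.univ.filter (fun t : Fin n => (t : ℕ) < (i : ℕ) ∧ g t = a), p t)
          + ∑ t ∈ (Finset.univ \ L).filter (fun t => g t = a), p t := by
      rw [← Finset.sum_filter_add_sum_filter_not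
        (Finset.univ.filter (fun t : Fin n => g t = a)) (fun t => (t : ℕ) < (i : ℕ))]
      congr 1
      · refine Finset.sum_congr ?_ (fun _ _ => rfl)
        ext u; simp [and_comm]
      · refine Finset.sum_congr ?_ (fun _ _ => rfl)
        ext u; simp [hLdef, and_comm]
    rw [hva, hsplit]; ring
  rw [Finset.prod_congr rfl fun a _ => hs1 a, Finset.prod_congr rfl fun a _ => hs0 a]
end

section
/- Correctness of the CondProb algorithm: fix 1 ≤ i ≤ n with p(i) > 0, let ρ := ρ_{i−1}(g(i)) (so ρ + p(i) ≤ 1 and hence ρ < 1), and define ĉ_0 = r_{i−1,0}/(1−ρ) and ĉ_j = (r_{i−1,j} − ρ·ĉ_{j−1})/(1−ρ) for j ≥ 1. Then for every j ≥ 1, p_{i,j} = p(i)·ĉ_{j−1}; that is, the forward substitution applied to the values r_{i−1,0}, r_{i−1,1}, … correctly produces the rank probabilities of tuple t_i. -/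
open Finset
open scoped Classical

/-- Forward substitution solving the bidiagonal system
`r 0 = (1-ρ)·c 0`, `r j = (1-ρ)·c j + ρ·c (j-1)`. -/
noncomputable def fwdSub (ρ : ℝ) (r : ℕ → ℝ) : ℕ → ℝ
  | 0 => r 0 / (1 - ρ)
  | j + 1 => (r (j + 1) - ρ * fwdSub ρ r j) / (1 - ρ)

lemma PB_zero {α : Type*} [DecidableEq α] (A : Finset α) (q : α → ℝ) :
    PB A q 0 = ∏ a ∈ A, (1 - q a) := by
  simp [PB]

lemma PB_insert_zero {α : Type*} [DecidableEq α] {b : α} {A : Finset α} (hb : b ∉ A)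
    (q : α → ℝ) : PB (insert b A) q 0 = (1 - q b) * PB A q 0 := by
  rw [PB_zero, PB_zero, Finset.prod_insert hb]

lemma PB_insert_succ {α : Type*} [DecidableEq α] {b : α} {A : Finset α} (hb : b ∉ A)
    (q : α → ℝ) (j : ℕ) :
    PB (insert b A) q (j + 1) = (1 - q b) * PB A q (j + 1) + q b * PB A q j := by
  rw [PB, Finset.powersetCard_succ_insert hb, Finset.sum_union]
  · congr 1
    · rw [PB, Finset.mul_sum]
      refine Finset.sum_congr rfl fun T hT => ?_
      have hTA : T ⊆ A := (Finset.mem_powersetCard.mp hT).1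
      have hbT : b ∉ T := fun h => hb (hTA h)
      rw [Finset.insert_sdiff_of_notMem _ hbT, Finset.prod_insert (by simp [hb])]
      ring
    · rw [Finset.sum_image, PB, Finset.mul_sum]
      · refine Finset.sum_congr rfl fun T hT => ?_
        have hTA : T ⊆ A := (Finset.mem_powersetCard.mp hT).1
        have hbT : b ∉ T := fun h => hb (hTA h)
        have h1 : insert b A \ insert b T = A \ T := by
          ext x
          simp only [Finset.mem_sdiff, Finset.mem_insert, not_or]
          constructor
          · rintro ⟨h2 | h2, h3, h4⟩
            · exact absurd h2 h3
            · exact ⟨h2, h4⟩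
          · rintro ⟨h2, h3⟩
            exact ⟨Or.inr h2, fun h => hb (h ▸ h2), h3⟩
        rw [h1, Finset.prod_insert hbT]
        ring
      · intro T hT T' hT' h
        have hTA : T ⊆ A := (Finset.mem_powersetCard.mp hT).1
        have hTA' : T' ⊆ A := (Finset.mem_powersetCard.mp hT').1
        have : (insert b T).erase b = (insert b T').erase b := by rw [h]
        rwa [Finset.erase_insert (fun h => hb (hTA h)),
          Finset.erase_insert (fun h => hb (hTA' h))] at this
  · rw [Finset.disjoint_left]
    intro T hT hT'
    have hTA : T ⊆ A := (Finset.mem_powersetCard.mp hT).1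
    obtain ⟨T', _, rfl⟩ := Finset.mem_image.mp hT'
    exact hb (hTA (Finset.mem_insert_self b T'))

noncomputable def qf {n m : ℕ} (g : Fin n → Fin m) (p : Fin n → ℝ) (a : Fin m) : ℝ :=
  ∑ t ∈ Finset.univ.filter (fun t : Fin n => g t = a), p t

noncomputable def hiSum {n m : ℕ} (g : Fin n → Fin m) (p : Fin n → ℝ) (i : ℕ) (a : Fin m) : ℝ :=
  ∑ t ∈ Finset.univ.filter (fun t : Fin n => ¬ (t : ℕ) < i ∧ g t = a), p t

lemma qf_split {n m : ℕ} (g : Fin n → Fin m) (p : Fin n → ℝ) (i : ℕ) (a : Fin m) :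
    qf g p a = rho g p i a + hiSum g p i a := by
  rw [qf, rho, hiSum,
    ← Finset.sum_filter_add_sum_filter_not (Finset.univ.filter (fun t : Fin n => g t = a))
      (fun t => (t : ℕ) < i)]
  congr 1 <;>
  · rw [Finset.filter_filter]
    refine Finset.sum_congr (Finset.filter_congr fun t _ => by tauto) fun _ _ => rfl

noncomputable def wRed {n m : ℕ} (g : Fin n → Fin m) (p : Fin n → ℝ) (A : Finset (Fin m))
    (S : Finset (Fin n)) : ℝ :=
  (∏ t ∈ S, p t) * ∏ a ∈ A.filter (fun a => ∀ t ∈ S, g t ≠ a), (1 - qf g p a)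

noncomputable def SS {n m : ℕ} (g : Fin n → Fin m) (i : ℕ) (A : Finset (Fin m)) (j : ℕ) :
    Finset (Finset (Fin n)) :=
  (Finset.univ : Finset (Finset (Fin n))).filter
      (fun S : Finset (Fin n) => (∀ t ∈ S, g t ∈ A) ∧ Set.InjOn g ↑S ∧
        (Finset.filter (fun t : Fin n => (t : ℕ) < i) S).card = j)

noncomputable def Wsum {n m : ℕ} (g : Fin n → Fin m) (p : Fin n → ℝ) (i : ℕ)
    (A : Finset (Fin m)) (j : ℕ) : ℝ :=
  ∑ S ∈ SS g i A j, wRed g p A S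

noncomputable def Fib {n m : ℕ} (g : Fin n → Fin m) (i : ℕ) (A : Finset (Fin m))
    (t : Fin n) (j : ℕ) : Finset (Finset (Fin n)) :=
  (Finset.univ : Finset (Finset (Fin n))).filter
      (fun S' : Finset (Fin n) => (∀ u ∈ S', g u ∈ A) ∧ Set.InjOn g ↑S' ∧
        (Finset.filter (fun u : Fin n => (u : ℕ) < i) S').card
          + (if (t : ℕ) < i then 1 else 0) = j)

lemma mem_SS {n m : ℕ} {g : Fin n → Fin m} {i : ℕ} {A : Finset (Fin m)} {j : ℕ}
    {S : Finset (Fin n)} :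
    S ∈ SS g i A j ↔ (∀ t ∈ S, g t ∈ A) ∧ Set.InjOn g ↑S ∧
      (Finset.filter (fun t : Fin n => (t : ℕ) < i) S).card = j := by
  simp [SS]

lemma mem_Fib {n m : ℕ} {g : Fin n → Fin m} {i : ℕ} {A : Finset (Fin m)} {t : Fin n} {j : ℕ}
    {S' : Finset (Fin n)} :
    S' ∈ Fib g i A t j ↔ (∀ u ∈ S', g u ∈ A) ∧ Set.InjOn g ↑S' ∧
      (Finset.filter (fun u : Fin n => (u : ℕ) < i) S').card
        + (if (t : ℕ) < i then 1 else 0) = j := by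
  simp [Fib]


section helpers
variable {n m : ℕ} {g : Fin n → Fin m} {p : Fin n → ℝ} {i : ℕ} {b : Fin m} {A : Finset (Fin m)}

lemma noB_set (hb : b ∉ A) (j : ℕ) :
    (SS g i (insert b A) j).filter (fun S => ∀ t ∈ S, g t ≠ b) = SS g i A j := by
  ext S
  simp only [Finset.mem_filter, mem_SS, Finset.mem_insert]
  constructor
  · rintro ⟨⟨h1, h2, h3⟩, h4⟩
    exact ⟨fun t ht => (h1 t ht).resolve_left (h4 t ht), h2, h3⟩
  · rintro ⟨h1, h2, h3⟩
    exact ⟨⟨fun t ht => Or.inr (h1 t ht), h2, h3⟩, fun t ht heq => hb (heq ▸ h1 t ht)⟩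

lemma wRed_noB (hb : b ∉ A) {S : Finset (Fin n)} (havoid : ∀ t ∈ S, g t ≠ b) :
    wRed g p (insert b A) S = (1 - qf g p b) * wRed g p A S := by
  rw [wRed, wRed, Finset.filter_insert, if_pos havoid,
    Finset.prod_insert (fun h => hb (Finset.mem_filter.mp h).1)]
  ring

lemma withB_biUnion (j : ℕ) :
    (SS g i (insert b A) j).filter (fun S => ¬ ∀ t ∈ S, g t ≠ b)
      = (Finset.univ.filter (fun t : Fin n => g t = b)).biUnion
          (fun t => (SS g i (insert b A) j).filter (fun S => t ∈ S ∧ g t = b)) := by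
  ext S
  simp only [Finset.mem_filter, Finset.mem_biUnion, Finset.mem_univ, true_and]
  constructor
  · rintro ⟨hS, h⟩
    push_neg at h
    obtain ⟨t, ht, htb⟩ := h
    exact ⟨t, htb, hS, ht, htb⟩
  · rintro ⟨t, htb, hS, ht, -⟩
    exact ⟨hS, fun h => h t ht htb⟩

lemma withB_disj (j : ℕ) :
    (↑(Finset.univ.filter (fun t : Fin n => g t = b)) : Set (Fin n)).PairwiseDisjoint
      (fun t => (SS g i (insert b A) j).filter (fun S => t ∈ S ∧ g t = b)) := by
  intro t ht t' ht' htt'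
  simp only [Finset.disjoint_left, Finset.mem_filter]
  rintro S ⟨hS, htS, htb⟩ ⟨-, ht'S, ht'b⟩
  exact htt' ((mem_SS.mp hS).2.1 (by exact_mod_cast htS) (by exact_mod_cast ht'S)
    (htb.trans ht'b.symm))

lemma inner_bij (hb : b ∉ A) {t : Fin n} (htb : g t = b) (j : ℕ) :
    ∑ S ∈ (SS g i (insert b A) j).filter (fun S => t ∈ S ∧ g t = b),
        wRed g p (insert b A) S
      = p t * ∑ S' ∈ Fib g i A t j, wRed g p A S' := by
  rw [Finset.mul_sum]
  refine Finset.sum_bij' (fun S _ => S.erase t) (fun S' _ => insert t S') ?_ ?_ ?_ ?_ ?_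
  · -- erase lands in Fib
    rintro S hS
    rw [Finset.mem_filter, mem_SS] at hS
    obtain ⟨⟨h1, h2, h3⟩, htS, -⟩ := hS
    rw [mem_Fib]
    refine ⟨?_, h2.mono (by exact_mod_cast Finset.erase_subset t S), ?_⟩
    · intro u hu
      have hu' : u ∈ S := Finset.mem_of_mem_erase hu
      rcases Finset.mem_insert.mp (h1 u hu') with h | h
      · exact absurd (h2 (by exact_mod_cast hu') (by exact_mod_cast htS)
          (h.trans htb.symm)) (Finset.ne_of_mem_erase hu)
      · exact h
    · by_cases hlt : (t : ℕ) < i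
      · have htf : t ∈ Finset.filter (fun u : Fin n => (u : ℕ) < i) S :=
          Finset.mem_filter.mpr ⟨htS, hlt⟩
        rw [if_pos hlt, Finset.filter_erase, Finset.card_erase_of_mem htf]
        have := Finset.card_pos.mpr ⟨t, htf⟩
        omega
      · have hnt : t ∉ Finset.filter (fun u : Fin n => (u : ℕ) < i) S :=
          fun h => hlt (Finset.mem_filter.mp h).2
        rw [if_neg hlt, Finset.filter_erase, Finset.erase_eq_of_notMem hnt]
        omega
  · -- insert lands in filtered SS
    rintro S' hS'
    rw [mem_Fib] at hS'
    obtain ⟨h1, h2, h3⟩ := hS'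
    have htS' : t ∉ S' := fun h => hb (htb ▸ h1 t h)
    rw [Finset.mem_filter, mem_SS]
    refine ⟨⟨?_, ?_, ?_⟩, Finset.mem_insert_self t S', htb⟩
    · intro u hu
      rcases Finset.mem_insert.mp hu with rfl | h
      · exact htb ▸ Finset.mem_insert_self b A
      · exact Finset.mem_insert_of_mem (h1 u h)
    · rw [Finset.coe_insert, Set.injOn_insert (by exact_mod_cast htS')]
      refine ⟨h2, ?_⟩
      rintro ⟨u, hu, huv⟩
      exact hb (htb ▸ huv ▸ h1 u (by exact_mod_cast hu))
    · rw [Finset.filter_insert]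
      by_cases hlt : (t : ℕ) < i
      · rw [if_pos hlt, Finset.card_insert_of_notMem
          (fun h => htS' (Finset.mem_filter.mp h).1)]
        rw [if_pos hlt] at h3
        omega
      · rw [if_neg hlt]
        rw [if_neg hlt] at h3
        omega
  · rintro S hS
    exact Finset.insert_erase (Finset.mem_filter.mp hS).2.1
  · rintro S' hS'
    rw [mem_Fib] at hS'
    exact Finset.erase_insert (fun h => hb (htb ▸ hS'.1 t h))
  · rintro S hS
    rw [Finset.mem_filter, mem_SS] at hS
    obtain ⟨⟨h1, h2, h3⟩, htS, -⟩ := hS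
    rw [wRed, wRed, ← Finset.mul_prod_erase S p htS]
    have hfil : (insert b A).filter (fun a => ∀ u ∈ S, g u ≠ a)
        = A.filter (fun a => ∀ u ∈ S.erase t, g u ≠ a) := by
      rw [Finset.filter_insert, if_neg (fun h => h t htS htb)]
      refine Finset.filter_congr fun a ha => ?_
      constructor
      · intro h u hu
        exact h u (Finset.mem_of_mem_erase hu)
      · intro h u hu heq
        rcases eq_or_ne u t with rfl | hne
        · exact hb (htb ▸ heq ▸ ha)
        · exact h u (Finset.mem_erase.mpr ⟨hne, hu⟩) heq
    rw [hfil]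
    ring

lemma Fib_low_zero {t : Fin n} (hlt : (t : ℕ) < i) : Fib g i A t 0 = ∅ := by
  rw [Fib, Finset.filter_eq_empty_iff]
  intro S' _
  rw [if_pos hlt]
  omega

lemma Fib_low_succ {t : Fin n} (hlt : (t : ℕ) < i) (k : ℕ) :
    Fib g i A t (k + 1) = SS g i A k := by
  rw [Fib, SS]
  refine Finset.filter_congr fun S' _ => ?_
  rw [if_pos hlt]
  constructor
  · rintro ⟨h1, h2, h3⟩; exact ⟨h1, h2, by omega⟩
  · rintro ⟨h1, h2, h3⟩; exact ⟨h1, h2, by omega⟩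

lemma Fib_high {t : Fin n} (hlt : ¬ (t : ℕ) < i) (j : ℕ) :
    Fib g i A t j = SS g i A j := by
  rw [Fib, SS]
  refine Finset.filter_congr fun S' _ => ?_
  rw [if_neg hlt]
  constructor
  · rintro ⟨h1, h2, h3⟩; exact ⟨h1, h2, by omega⟩
  · rintro ⟨h1, h2, h3⟩; exact ⟨h1, h2, by omega⟩

lemma sum_Tb_low :
    ∑ t ∈ (Finset.univ.filter (fun t : Fin n => g t = b)).filter
        (fun t : Fin n => (t : ℕ) < i), p t = rho g p i b := by
  rw [rho, Finset.filter_filter]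
  exact Finset.sum_congr (Finset.filter_congr fun t _ => by tauto) fun _ _ => rfl

lemma sum_Tb_high :
    ∑ t ∈ (Finset.univ.filter (fun t : Fin n => g t = b)).filter
        (fun t : Fin n => ¬ (t : ℕ) < i), p t = hiSum g p i b := by
  rw [hiSum, Finset.filter_filter]
  exact Finset.sum_congr (Finset.filter_congr fun t _ => by tauto) fun _ _ => rfl

end helpers

lemma wsum_eq {n m : ℕ} (g : Fin n → Fin m) (p : Fin n → ℝ) (i : ℕ) :
    ∀ (A : Finset (Fin m)) (j : ℕ), Wsum g p i A j = PB A (rho g p i) j := by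
  intro A
  induction A using Finset.induction_on with
  | empty =>
    intro j
    have hset : ∀ S : Finset (Fin n),
        ((∀ t ∈ S, g t ∈ (∅ : Finset (Fin m))) ∧ Set.InjOn g ↑S ∧
          (Finset.filter (fun t : Fin n => (t : ℕ) < i) S).card = j) ↔ (S = ∅ ∧ j = 0) := by
      intro S
      constructor
      · rintro ⟨h1, _, h3⟩
        have hS : S = ∅ := by
          by_contra h
          obtain ⟨t, ht⟩ := Finset.nonempty_iff_ne_empty.mpr h
          exact absurd (h1 t ht) (Finset.notMem_empty _)
        subst hS
        simp at h3
        exact ⟨rfl, h3.symm⟩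
      · rintro ⟨rfl, rfl⟩
        simp [Set.injOn_empty]
    cases j with
    | zero =>
      have : SS g i (∅ : Finset (Fin m)) 0 = {∅} := by
        rw [SS]
        ext S
        simp only [Finset.mem_filter, Finset.mem_univ, true_and, Finset.mem_singleton]
        rw [hset S]
        tauto
      rw [Wsum, this]
      simp [PB, wRed]
    | succ k =>
      have : SS g i (∅ : Finset (Fin m)) (k + 1) = ∅ := by
        rw [SS]
        ext S
        rw [Finset.mem_filter, and_iff_right (Finset.mem_univ S), hset S]
        simp
      rw [Wsum, this, PB, show Finset.powersetCard (k + 1) (∅ : Finset (Fin m)) = ∅ from rfl]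
      simp
  | @insert b A hb IH =>
    intro j
    have hsplit :
        Wsum g p i (insert b A) j
          = ∑ S ∈ (SS g i (insert b A) j).filter (fun S => ∀ t ∈ S, g t ≠ b),
              wRed g p (insert b A) S
            + ∑ S ∈ (SS g i (insert b A) j).filter (fun S => ¬ ∀ t ∈ S, g t ≠ b),
              wRed g p (insert b A) S := by
      rw [Wsum, Finset.sum_filter_add_sum_filter_not]
    have hA : ∑ S ∈ (SS g i (insert b A) j).filter (fun S => ∀ t ∈ S, g t ≠ b),
        wRed g p (insert b A) S = (1 - qf g p b) * PB A (rho g p i) j := by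
      rw [noB_set hb j,
        show (∑ S ∈ SS g i A j, wRed g p (insert b A) S)
            = ∑ S ∈ SS g i A j, (1 - qf g p b) * wRed g p A S from
          Finset.sum_congr rfl fun S hS => wRed_noB hb (fun t ht heq =>
            hb (heq ▸ (mem_SS.mp hS).1 t ht)),
        ← Finset.mul_sum, ← Wsum, IH j]
    have hB : ∑ S ∈ (SS g i (insert b A) j).filter (fun S => ¬ ∀ t ∈ S, g t ≠ b),
        wRed g p (insert b A) S
        = ∑ t ∈ Finset.univ.filter (fun t : Fin n => g t = b),
            p t * ∑ S' ∈ Fib g i A t j, wRed g p A S' := by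
      rw [withB_biUnion j, Finset.sum_biUnion (withB_disj j)]
      exact Finset.sum_congr rfl fun t ht => inner_bij hb (Finset.mem_filter.mp ht).2 j
    rw [hsplit, hA, hB, ← Finset.sum_filter_add_sum_filter_not
      (Finset.univ.filter (fun t : Fin n => g t = b)) (fun t : Fin n => (t : ℕ) < i)]
    cases j with
    | zero =>
      have h1 : ∀ t ∈ (Finset.univ.filter (fun t : Fin n => g t = b)).filter
          (fun t : Fin n => (t : ℕ) < i),
          p t * ∑ S' ∈ Fib g i A t 0, wRed g p A S' = 0 := by
        intro t ht
        rw [Fib_low_zero (Finset.mem_filter.mp ht).2]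
        simp
      have h2 : ∀ t ∈ (Finset.univ.filter (fun t : Fin n => g t = b)).filter
          (fun t : Fin n => ¬ (t : ℕ) < i),
          p t * ∑ S' ∈ Fib g i A t 0, wRed g p A S'
            = p t * PB A (rho g p i) 0 := by
        intro t ht
        rw [Fib_high (Finset.mem_filter.mp ht).2, ← Wsum, IH 0]
      rw [Finset.sum_congr rfl h1, Finset.sum_congr rfl h2, Finset.sum_const_zero,
        ← Finset.sum_mul, sum_Tb_high, PB_insert_zero hb, qf_split g p i b]
      ring
    | succ k =>
      have h1 : ∀ t ∈ (Finset.univ.filter (fun t : Fin n => g t = b)).filter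
          (fun t : Fin n => (t : ℕ) < i),
          p t * ∑ S' ∈ Fib g i A t (k + 1), wRed g p A S'
            = p t * PB A (rho g p i) k := by
        intro t ht
        rw [Fib_low_succ (Finset.mem_filter.mp ht).2 k, ← Wsum, IH k]
      have h2 : ∀ t ∈ (Finset.univ.filter (fun t : Fin n => g t = b)).filter
          (fun t : Fin n => ¬ (t : ℕ) < i),
          p t * ∑ S' ∈ Fib g i A t (k + 1), wRed g p A S'
            = p t * PB A (rho g p i) (k + 1) := by
        intro t ht
        rw [Fib_high (Finset.mem_filter.mp ht).2, ← Wsum, IH (k + 1)]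
      rw [Finset.sum_congr rfl h1, Finset.sum_congr rfl h2, ← Finset.sum_mul,
        ← Finset.sum_mul, sum_Tb_low, sum_Tb_high, PB_insert_succ hb, qf_split g p i b]
      ring

lemma card_coe {n : ℕ} (S : Finset (Fin n)) (i : Fin n) :
    (S.filter (fun t => (t : ℕ) < (i : ℕ))).card
      = (Finset.filter (fun t : Fin n => (t : ℕ) < (i : ℕ)) S).card := by
  have h1 : (do let a ← S; pure ((a : ℕ))) = S.image Fin.val := by
    ext x
    simp [Finset.bind_def, Finset.sup_eq_biUnion, Finset.mem_biUnion, eq_comm]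
  rw [h1, Finset.filter_image]
  exact Finset.card_image_of_injective _ Fin.val_injective

lemma pij_eq {n m : ℕ} (g : Fin n → Fin m) (p : Fin n → ℝ) (i : Fin n) (j : ℕ) :
    pij g p i j = p i * Wsum g p (i : ℕ) (Finset.univ.erase (g i)) (j - 1) := by
  have hii : ¬ ((i : ℕ) < (i : ℕ)) := lt_irrefl _
  rw [pij, Wsum, Finset.mul_sum]
  refine Finset.sum_bij' (fun S _ => S.erase i) (fun S' _ => insert i S') ?_ ?_ ?_ ?_ ?_
  · rintro S hS
    simp only [Finset.mem_filter, Finset.mem_univ, true_and, card_coe] at hS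
    obtain ⟨h2, htS, h3⟩ := hS
    rw [mem_SS]
    refine ⟨?_, h2.mono (by exact_mod_cast Finset.erase_subset i S), ?_⟩
    · intro t ht
      refine Finset.mem_erase.mpr ⟨?_, Finset.mem_univ _⟩
      intro heq
      exact Finset.ne_of_mem_erase ht
        (h2 (by exact_mod_cast Finset.mem_of_mem_erase ht) (by exact_mod_cast htS) heq)
    · have hni : i ∉ Finset.filter (fun t : Fin n => (t : ℕ) < (i : ℕ)) S :=
        fun h => hii (Finset.mem_filter.mp h).2
      rw [Finset.filter_erase, Finset.erase_eq_of_notMem hni, h3]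
  · rintro S' hS'
    rw [mem_SS] at hS'
    obtain ⟨h1, h2, h3⟩ := hS'
    have hiS' : i ∉ S' := fun h => Finset.ne_of_mem_erase (h1 i h) rfl
    simp only [Finset.mem_filter, Finset.mem_univ, true_and, card_coe]
    refine ⟨?_, Finset.mem_insert_self i S', ?_⟩
    · rw [Finset.coe_insert, Set.injOn_insert (by exact_mod_cast hiS')]
      refine ⟨h2, ?_⟩
      rintro ⟨u, hu, huv⟩
      exact Finset.ne_of_mem_erase (h1 u (by exact_mod_cast hu)) huv
    · rw [Finset.filter_insert, if_neg hii, h3]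
  · rintro S hS
    simp only [Finset.mem_filter, Finset.mem_univ, true_and] at hS
    exact Finset.insert_erase hS.2.1
  · rintro S' hS'
    rw [mem_SS] at hS'
    exact Finset.erase_insert (fun h => Finset.ne_of_mem_erase (hS'.1 i h) rfl)
  · rintro S hS
    simp only [Finset.mem_filter, Finset.mem_univ, true_and] at hS
    obtain ⟨h2, htS, h3⟩ := hS
    rw [worldProb, wRed, ← Finset.mul_prod_erase S p htS]
    have hfil : Finset.univ.filter (fun a : Fin m => ∀ t ∈ S, g t ≠ a)
        = (Finset.univ.erase (g i)).filter (fun a => ∀ t ∈ S.erase i, g t ≠ a) := by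
      ext a
      simp only [Finset.mem_filter, Finset.mem_univ, true_and]
      constructor
      · intro h
        exact ⟨Finset.mem_erase.mpr ⟨fun heq => h i htS heq.symm, Finset.mem_univ _⟩,
          fun t ht => h t (Finset.mem_of_mem_erase ht)⟩
      · rintro ⟨ha, h⟩ t ht heq
        rcases eq_or_ne t i with rfl | htne
        · exact Finset.ne_of_mem_erase ha heq.symm
        · exact h t (Finset.mem_erase.mpr ⟨htne, ht⟩) heq
    rw [hfil]
    simp only [qf]
    ring

lemma fwd_eq {n m : ℕ} (g : Fin n → Fin m) (p : Fin n → ℝ) (i : ℕ) (gi : Fin m)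
    (hρ : rho g p i gi < 1) (l : ℕ) :
    fwdSub (rho g p i gi) (fun l => PB Finset.univ (rho g p i) l) l
      = PB (Finset.univ.erase gi) (rho g p i) l := by
  have hins : insert gi (Finset.univ.erase gi) = (Finset.univ : Finset (Fin m)) :=
    Finset.insert_erase (Finset.mem_univ gi)
  have hgi : gi ∉ Finset.univ.erase gi := Finset.notMem_erase gi _
  have hne : (1 : ℝ) - rho g p i gi ≠ 0 := by linarith
  induction l with
  | zero =>
    rw [fwdSub]
    rw [show PB Finset.univ (rho g p i) 0 = PB (insert gi (Finset.univ.erase gi)) (rho g p i) 0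
        from by rw [hins], PB_insert_zero hgi]
    field_simp
  | succ k IH =>
    rw [fwdSub, IH]
    rw [show PB Finset.univ (rho g p i) (k + 1)
        = PB (insert gi (Finset.univ.erase gi)) (rho g p i) (k + 1) from by rw [hins],
      PB_insert_succ hgi]
    field_simp
    ring

/-- Correctness of the CondProb algorithm: for a tuple `i` with `p i > 0`, forward
substitution with `ρ = ρ_{i-1}(g i)` applied to the count distribution
`r_{i-1,·} = PB_·(ρ_{i-1}(1),…,ρ_{i-1}(m))` of the preceding tuples produces
conditional probabilities `ĉ` with `p_{i,j} = p i · ĉ (j-1)` for every `j ≥ 1`.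
Here `i : Fin n` is 0-based, so `rho g p (i : ℕ)` is `ρ_{i-1}` of the informal
(1-based) statement. -/
theorem condProb_correct (n m : ℕ) (g : Fin n → Fin m) (p : Fin n → ℝ)
    (hp : ∀ t, 0 ≤ p t)
    (hsum : ∀ a : Fin m, ∑ t ∈ Finset.univ.filter (fun t : Fin n => g t = a), p t ≤ 1)
    (i : Fin n) (hpi : 0 < p i) :
    ∀ j : ℕ, 1 ≤ j →
      pij g p i j
        = p i * fwdSub (rho g p (i : ℕ) (g i))
            (fun l => PB Finset.univ (rho g p (i : ℕ)) l) (j - 1) := by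
  intro j hj
  obtain ⟨k, rfl⟩ : ∃ k, j = k + 1 := ⟨j - 1, (Nat.succ_pred_eq_of_pos hj).symm⟩
  have h1 : qf g p (g i) ≤ 1 := hsum (g i)
  have hsplit := qf_split g p (i : ℕ) (g i)
  have hmem : i ∈ Finset.univ.filter
      (fun t : Fin n => ¬ (t : ℕ) < (i : ℕ) ∧ g t = g i) :=
    Finset.mem_filter.mpr ⟨Finset.mem_univ _, lt_irrefl _, rfl⟩
  have hhi : p i ≤ hiSum g p (i : ℕ) (g i) :=
    Finset.single_le_sum (fun t _ => hp t) hmem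
  have hρ : rho g p (i : ℕ) (g i) < 1 := by linarith
  rw [pij_eq g p i (k + 1), Nat.add_sub_cancel, wsum_eq g p (i : ℕ) _ k,
    fwd_eq g p (i : ℕ) (g i) hρ k]
end

section
/- Upper bound on unseen top-k probabilities: for every 0 ≤ i < n and every k ≥ 1, the top-k probability of the next tuple is bounded by the partial sum of the count distribution of the seen tuples: tkp_k(i+1) ≤ Σ_{j=0}^{k−1} r_{i,j}. -/
open Finset
open scoped Classical

lemma master_zero {n m : ℕ} (g : Fin n → Fin m) (D : Finset (Fin n)) :
    D.powerset.filter (fun S : Finset (Fin n) => Set.InjOn g ↑S ∧ S.card = 0) = {∅} := by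
  ext S
  simp only [mem_filter, mem_powerset, card_eq_zero, mem_singleton]
  constructor
  · rintro ⟨-, -, rfl⟩; rfl
  · rintro rfl; exact ⟨empty_subset _, by simp [Set.injOn_empty], rfl⟩

lemma master {n m : ℕ} (g : Fin n → Fin m) (u : Fin n → ℝ) (q : Fin m → ℝ)
    (A : Finset (Fin m)) :
    ∀ D : Finset (Fin n), (∀ t ∈ D, g t ∈ A) → ∀ j : ℕ,
    ∑ S ∈ D.powerset.filter (fun S : Finset (Fin n) => Set.InjOn g ↑S ∧ S.card = j),
        (∏ t ∈ S, u t) * ∏ a ∈ A \ S.image g, q a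
      = ∑ T ∈ A.powersetCard j,
          (∏ a ∈ T, ∑ t ∈ D.filter (fun t => g t = a), u t) * ∏ a ∈ A \ T, q a := by
  induction A using Finset.induction_on with
  | empty =>
    intro D hD j
    have hDe : D = ∅ := eq_empty_of_forall_notMem fun t ht => (notMem_empty _ (hD t ht))
    subst hDe
    rcases j with _ | j
    · rw [powerset_empty, filter_singleton, if_pos ⟨by simp [Set.injOn_empty], rfl⟩]
      simp
    · rw [powerset_empty, filter_singleton, if_neg (by simp),
        powersetCard_eq_empty.2 (by simp)]
      simp
  | insert a A' ha IH =>
    intro D hD j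
    set Dne := D.filter (fun t => g t ≠ a) with hDne
    have hD'A : ∀ t ∈ Dne, g t ∈ A' := by
      intro t ht
      rw [hDne, mem_filter] at ht
      rcases mem_insert.1 (hD t ht.1) with h | h
      · exact absurd h ht.2
      · exact h
    rcases j with _ | j
    · rw [master_zero, powersetCard_zero]
      simp
    -- split LHS by whether a ∈ S.image g
    rw [← sum_filter_add_sum_filter_not
        (D.powerset.filter (fun S : Finset (Fin n) => Set.InjOn g ↑S ∧ S.card = j + 1))
        (fun S => a ∈ S.image g)]
    -- Part 1 : S avoiding a
    have claim1 : (D.powerset.filter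
          (fun S : Finset (Fin n) => Set.InjOn g ↑S ∧ S.card = j + 1)).filter
          (fun S => ¬ a ∈ S.image g)
        = Dne.powerset.filter (fun S : Finset (Fin n) => Set.InjOn g ↑S ∧ S.card = j + 1) := by
      ext S
      rw [mem_filter, mem_filter, mem_powerset, mem_filter, mem_powerset]
      constructor
      · rintro ⟨⟨hs, hinj, hc⟩, him⟩
        exact ⟨fun t ht => mem_filter.2 ⟨hs ht, fun h => him (mem_image.2 ⟨t, ht, h⟩)⟩,
          hinj, hc⟩
      · rintro ⟨hs, hinj, hc⟩
        refine ⟨⟨fun t ht => (mem_filter.1 (hs ht)).1, hinj, hc⟩, fun h => ?_⟩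
        obtain ⟨t, ht, hgt⟩ := mem_image.1 h
        exact (mem_filter.1 (hs ht)).2 hgt
    have part1 : ∑ S ∈ (D.powerset.filter
          (fun S : Finset (Fin n) => Set.InjOn g ↑S ∧ S.card = j + 1)).filter
          (fun S => ¬ a ∈ S.image g),
          (∏ t ∈ S, u t) * ∏ b ∈ insert a A' \ S.image g, q b
        = q a * ∑ T ∈ A'.powersetCard (j + 1),
            (∏ b ∈ T, ∑ t ∈ Dne.filter (fun t => g t = b), u t) * ∏ b ∈ A' \ T, q b := by
      rw [claim1, ← IH Dne hD'A (j + 1), mul_sum]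
      refine sum_congr rfl fun S hS => ?_
      have haim : a ∉ S.image g := by
        rw [mem_filter, mem_powerset] at hS
        intro h
        obtain ⟨t, ht, hgt⟩ := mem_image.1 h
        exact (mem_filter.1 (hS.1 ht)).2 hgt
      rw [insert_sdiff_of_notMem _ haim,
        prod_insert (fun h => ha (mem_sdiff.1 h).1)]
      ring
    -- Part 2 : S hitting a
    set Da := D.filter (fun t => g t = a) with hDa
    set X := Dne.powerset.filter
      (fun S : Finset (Fin n) => Set.InjOn g ↑S ∧ S.card = j) with hX
    have claim2 : (D.powerset.filter
          (fun S : Finset (Fin n) => Set.InjOn g ↑S ∧ S.card = j + 1)).filter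
          (fun S => a ∈ S.image g)
        = Da.biUnion (fun t => X.image (insert t)) := by
      ext S
      constructor
      · intro hS
        rw [mem_filter, mem_filter, mem_powerset] at hS
        obtain ⟨⟨hs, hinj, hc⟩, him⟩ := hS
        obtain ⟨t, ht, hgt⟩ := mem_image.1 him
        refine mem_biUnion.2 ⟨t, mem_filter.2 ⟨hs ht, hgt⟩,
          mem_image.2 ⟨S.erase t, ?_, insert_erase ht⟩⟩
        rw [hX, mem_filter, mem_powerset]
        refine ⟨?_, hinj.mono (by simp [Set.subset_def]; intro s hs' _; exact hs'),
          by rw [card_erase_of_mem ht, hc]; rfl⟩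
        intro s hs'
        have hsS := mem_of_mem_erase hs'
        refine mem_filter.2 ⟨hs hsS, fun hgs => (ne_of_mem_erase hs') ?_⟩
        exact hinj (by exact_mod_cast hsS) (by exact_mod_cast ht) (by rw [hgs, hgt])
      · intro hS
        obtain ⟨t, htDa, hS'⟩ := mem_biUnion.1 hS
        obtain ⟨S₀, hS₀, rfl⟩ := mem_image.1 hS'
        rw [hX, mem_filter, mem_powerset] at hS₀
        obtain ⟨hs0, hinj0, hc0⟩ := hS₀
        rw [hDa, mem_filter] at htDa
        have htn : t ∉ S₀ := fun h => (mem_filter.1 (hs0 h)).2 htDa.2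
        rw [mem_filter, mem_filter, mem_powerset]
        refine ⟨⟨?_, ?_, by rw [card_insert_of_notMem htn, hc0]⟩,
          mem_image.2 ⟨t, mem_insert_self _ _, htDa.2⟩⟩
        · intro s hs'
          rcases mem_insert.1 hs' with rfl | hs'
          · exact htDa.1
          · exact (mem_filter.1 (hs0 hs')).1
        · intro x hx y hy hxy
          simp only [coe_insert, Set.mem_insert_iff, mem_coe] at hx hy
          rcases hx with rfl | hx <;> rcases hy with rfl | hy
          · rfl
          · exact absurd (hxy.symm.trans htDa.2) (mem_filter.1 (hs0 hy)).2
          · exact absurd (hxy.trans htDa.2) (mem_filter.1 (hs0 hx)).2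
          · exact hinj0 (by exact_mod_cast hx) (by exact_mod_cast hy) hxy
    have hsubX : ∀ S₀ ∈ X, S₀ ⊆ Dne := fun S₀ h => mem_powerset.1 (mem_filter.1 h).1
    have hnotmem : ∀ t ∈ Da, ∀ S₀ ∈ X, t ∉ S₀ := by
      intro t ht S₀ h0 hmem
      exact (mem_filter.1 (hsubX S₀ h0 hmem)).2 (mem_filter.1 ht).2
    have hdisj : (↑Da : Set (Fin n)).PairwiseDisjoint (fun t => X.image (insert t)) := by
      intro t1 h1 t2 h2 hne
      rw [Function.onFun, disjoint_left]
      intro S hS1 hS2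
      obtain ⟨S1, hS1', rfl⟩ := mem_image.1 hS1
      obtain ⟨S2, hS2', hEq⟩ := mem_image.1 hS2
      have ht2 : t2 ∈ insert t1 S1 := hEq ▸ mem_insert_self t2 S2
      rcases mem_insert.1 ht2 with h | h
      · exact hne h.symm
      · exact hnotmem t2 (mem_coe.1 h2) S1 hS1' h
    have part2 : ∑ S ∈ (D.powerset.filter
          (fun S : Finset (Fin n) => Set.InjOn g ↑S ∧ S.card = j + 1)).filter
          (fun S => a ∈ S.image g),
          (∏ t ∈ S, u t) * ∏ b ∈ insert a A' \ S.image g, q b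
        = (∑ t ∈ Da, u t) * ∑ T ∈ A'.powersetCard j,
            (∏ b ∈ T, ∑ t ∈ Dne.filter (fun t => g t = b), u t) * ∏ b ∈ A' \ T, q b := by
      rw [claim2, sum_biUnion hdisj, ← IH Dne hD'A j, sum_mul]
      refine sum_congr rfl fun t ht => ?_
      have hia : g t = a := (mem_filter.1 ht).2
      rw [sum_image (fun S₀ h0 S₁ h1 hEq => by
        rw [← erase_insert (hnotmem t ht S₀ h0), hEq, erase_insert (hnotmem t ht S₁ h1)]),
        mul_sum]
      refine sum_congr rfl fun S₀ h0 => ?_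
      have htn : t ∉ S₀ := hnotmem t ht S₀ h0
      have haim : a ∉ S₀.image g := by
        intro h
        obtain ⟨s, hs', hgs⟩ := mem_image.1 h
        exact (mem_filter.1 (hsubX S₀ h0 hs')).2 hgs
      have key : insert a A' \ insert a (S₀.image g) = A' \ S₀.image g := by
        ext b
        simp only [mem_sdiff, mem_insert, not_or]
        constructor
        · rintro ⟨hb | hb, hba, hbi⟩
          · exact absurd hb hba
          · exact ⟨hb, hbi⟩
        · rintro ⟨hb, hbi⟩
          exact ⟨Or.inr hb, fun h => ha (h ▸ hb), hbi⟩
      rw [prod_insert htn, image_insert, hia, key]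
      ring
    -- RHS assembly
    have hfil : ∀ b : Fin m, b ≠ a →
        D.filter (fun t => g t = b) = Dne.filter (fun t => g t = b) := by
      intro b hb
      ext t
      rw [mem_filter, mem_filter, hDne, mem_filter]
      constructor
      · rintro ⟨ht, hgt⟩
        exact ⟨⟨ht, fun h => hb (hgt.symm.trans h)⟩, hgt⟩
      · rintro ⟨⟨ht, -⟩, hgt⟩
        exact ⟨ht, hgt⟩
    have hdisjU : Disjoint (A'.powersetCard (j + 1))
        ((A'.powersetCard j).image (insert a)) := by
      rw [disjoint_left]
      intro T h1 h2
      obtain ⟨T₀, hT₀, rfl⟩ := mem_image.1 h2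
      exact ha ((mem_powersetCard.1 h1).1 (mem_insert_self a T₀))
    have hinsA : ∀ T₀ ∈ A'.powersetCard j, ∀ T₁ ∈ A'.powersetCard j,
        insert a T₀ = insert a T₁ → T₀ = T₁ := by
      intro T₀ h0 T₁ h1 hEq
      have ha0 : a ∉ T₀ := fun h => ha ((mem_powersetCard.1 h0).1 h)
      have ha1 : a ∉ T₁ := fun h => ha ((mem_powersetCard.1 h1).1 h)
      rw [← erase_insert ha0, hEq, erase_insert ha1]
    have e1 : ∑ T ∈ A'.powersetCard (j + 1),
        (∏ b ∈ T, ∑ t ∈ D.filter (fun t => g t = b), u t) * ∏ b ∈ insert a A' \ T, q b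
        = q a * ∑ T ∈ A'.powersetCard (j + 1),
            (∏ b ∈ T, ∑ t ∈ Dne.filter (fun t => g t = b), u t) * ∏ b ∈ A' \ T, q b := by
      rw [mul_sum]
      refine sum_congr rfl fun T hT => ?_
      have hTA : T ⊆ A' := (mem_powersetCard.1 hT).1
      have haT : a ∉ T := fun h => ha (hTA h)
      rw [insert_sdiff_of_notMem _ haT, prod_insert (fun h => ha (mem_sdiff.1 h).1),
        prod_congr rfl (fun b hb => by rw [hfil b (fun h => ha (h ▸ hTA hb))])]
      ring
    have e2 : ∑ T ∈ A'.powersetCard j,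
        (∏ b ∈ insert a T, ∑ t ∈ D.filter (fun t => g t = b), u t) *
          ∏ b ∈ insert a A' \ insert a T, q b
        = (∑ t ∈ Da, u t) * ∑ T ∈ A'.powersetCard j,
            (∏ b ∈ T, ∑ t ∈ Dne.filter (fun t => g t = b), u t) * ∏ b ∈ A' \ T, q b := by
      rw [mul_sum]
      refine sum_congr rfl fun T hT => ?_
      have hTA : T ⊆ A' := (mem_powersetCard.1 hT).1
      have haT : a ∉ T := fun h => ha (hTA h)
      have key : insert a A' \ insert a T = A' \ T := by
        ext b
        simp only [mem_sdiff, mem_insert, not_or]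
        constructor
        · rintro ⟨hb | hb, hba, hbi⟩
          · exact absurd hb hba
          · exact ⟨hb, hbi⟩
        · rintro ⟨hb, hbi⟩
          exact ⟨Or.inr hb, fun h => ha (h ▸ hb), hbi⟩
      rw [key, prod_insert haT,
        prod_congr rfl (fun b hb => by rw [hfil b (fun h => ha (h ▸ hTA hb))]), ← hDa]
      ring
    rw [part2, part1, powersetCard_succ_insert ha, sum_union hdisjU, sum_image hinsA, e1, e2]
    ring

lemma master' {n m : ℕ} (g : Fin n → Fin m) (u : Fin n → ℝ) (q : Fin m → ℝ)
    (A : Finset (Fin m)) (D : Finset (Fin n)) (hD : ∀ t ∈ D, g t ∈ A) :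
    ∑ S ∈ D.powerset.filter (fun S : Finset (Fin n) => Set.InjOn g ↑S),
        (∏ t ∈ S, u t) * ∏ a ∈ A \ S.image g, q a
      = ∏ a ∈ A, (q a + ∑ t ∈ D.filter (fun t => g t = a), u t) := by
  have hor : ∀ a ∈ A, q a + ∑ t ∈ D.filter (fun t => g t = a), u t
      = (∑ t ∈ D.filter (fun t => g t = a), u t) + q a := fun a _ => add_comm _ _
  rw [prod_congr rfl hor, prod_add, sum_powerset]
  set R : ℕ → ℝ := fun j => ∑ T ∈ A.powersetCard j,
      (∏ a ∈ T, ∑ t ∈ D.filter (fun t => g t = a), u t) * ∏ a ∈ A \ T, q a with hR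
  have hRj : ∀ j, (∑ T ∈ A.powersetCard j,
      (∏ a ∈ T, ∑ t ∈ D.filter (fun t => g t = a), u t) * ∏ a ∈ A \ T, q a) = R j :=
    fun j => rfl
  have hL : ∑ S ∈ D.powerset.filter (fun S : Finset (Fin n) => Set.InjOn g ↑S),
        (∏ t ∈ S, u t) * ∏ a ∈ A \ S.image g, q a
      = ∑ j ∈ range (D.card + 1), R j := by
    rw [← sum_fiberwise_of_maps_to (g := fun S : Finset (Fin n) => S.card)
      (t := range (D.card + 1))
      (fun S hS => mem_range.2 (Nat.lt_succ_of_le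
        (card_le_card (mem_powerset.1 (mem_filter.1 hS).1))))]
    refine sum_congr rfl fun j hj => ?_
    rw [filter_filter, master g u q A D hD j, hRj]
  rw [hL]
  have hz1 : ∀ j, D.card < j → R j = 0 := by
    intro j hj
    rw [← hRj, ← master g u q A D hD j]
    have : D.powerset.filter (fun S : Finset (Fin n) => Set.InjOn g ↑S ∧ S.card = j) = ∅ := by
      refine eq_empty_of_forall_notMem fun S hS => ?_
      rw [mem_filter, mem_powerset] at hS
      exact absurd (hS.2.2 ▸ card_le_card hS.1) (by omega)
    rw [this, sum_empty]
  have hz2 : ∀ j, A.card < j → R j = 0 := by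
    intro j hj
    rw [← hRj, powersetCard_eq_empty.2 hj, sum_empty]
  rcases le_total D.card A.card with h | h
  · exact sum_subset (by simp [range_subset]; omega)
      (fun j _ hj => hz1 j (by simp [mem_range] at hj ⊢; omega))
  · exact (sum_subset (by simp [range_subset]; omega)
      (fun j _ hj => hz2 j (by simp [mem_range] at hj ⊢; omega))).symm

lemma filt_eq_sdiff {n m : ℕ} (g : Fin n → Fin m) (S : Finset (Fin n)) :
    univ.filter (fun a : Fin m => ∀ t ∈ S, g t ≠ a) = univ \ S.image g := by
  ext a
  simp only [mem_filter, mem_univ, true_and, mem_sdiff, mem_image, not_exists]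
  push_neg
  tauto

lemma rho_eq {n m : ℕ} (g : Fin n → Fin m) (p : Fin n → ℝ) (i : ℕ) (a : Fin m) :
    rho g p i a
      = ∑ t ∈ (univ.filter (fun t : Fin n => (t : ℕ) < i)).filter (fun t => g t = a), p t := by
  rw [rho, filter_filter]

lemma lemA {n m : ℕ} (g : Fin n → Fin m) (p : Fin n → ℝ) (i : ℕ) (j : ℕ) :
    ∑ S ∈ ((univ.filter (fun t : Fin n => (t : ℕ) < i)).powerset.filter
        (fun S : Finset (Fin n) => Set.InjOn g ↑S ∧ S.card = j)),
      worldProbI g p i S = PB univ (rho g p i) j := by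
  have h := master g p (fun a => 1 - rho g p i a) univ
    (univ.filter (fun t : Fin n => (t : ℕ) < i)) (fun t _ => mem_univ _) j
  have h2 : (∑ T ∈ (univ : Finset (Fin m)).powersetCard j,
        (∏ a ∈ T, ∑ t ∈ ((univ.filter (fun t : Fin n => (t : ℕ) < i)).filter
            (fun t => g t = a)), p t) * ∏ a ∈ univ \ T, (1 - rho g p i a))
      = PB univ (rho g p i) j := by
    rw [PB]
    exact sum_congr rfl fun T _ => by
      rw [prod_congr rfl fun a (_ : a ∈ T) => (rho_eq g p i a).symm]
  refine Eq.trans ?_ (h.trans h2)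
  refine sum_congr rfl fun S hS => ?_
  rw [worldProbI, filt_eq_sdiff]

lemma rho_nonneg {n m : ℕ} (g : Fin n → Fin m) (p : Fin n → ℝ) (hp : ∀ t, 0 ≤ p t)
    (i : ℕ) (a : Fin m) : 0 ≤ rho g p i a :=
  sum_nonneg fun t _ => hp t

lemma rho_le_one {n m : ℕ} (g : Fin n → Fin m) (p : Fin n → ℝ) (hp : ∀ t, 0 ≤ p t)
    (hsum : ∀ a : Fin m, ∑ t ∈ Finset.univ.filter (fun t : Fin n => g t = a), p t ≤ 1)
    (i : ℕ) (a : Fin m) : rho g p i a ≤ 1 := by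
  refine le_trans (sum_le_sum_of_subset_of_nonneg ?_ fun t _ _ => hp t) (hsum a)
  intro t ht; rw [mem_filter] at ht ⊢; exact ⟨ht.1, ht.2.2⟩

lemma worldProbI_nonneg {n m : ℕ} (g : Fin n → Fin m) (p : Fin n → ℝ) (hp : ∀ t, 0 ≤ p t)
    (hsum : ∀ a : Fin m, ∑ t ∈ Finset.univ.filter (fun t : Fin n => g t = a), p t ≤ 1)
    (i : ℕ) (S : Finset (Fin n)) : 0 ≤ worldProbI g p i S := by
  refine mul_nonneg (prod_nonneg fun t _ => hp t) (prod_nonneg fun a _ => ?_)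
  have := rho_le_one g p hp hsum i a
  linarith

lemma lemB {n m : ℕ} (g : Fin n → Fin m) (p : Fin n → ℝ)
    (hp : ∀ t, 0 ≤ p t)
    (hsum : ∀ a : Fin m, ∑ t ∈ Finset.univ.filter (fun t : Fin n => g t = a), p t ≤ 1)
    (i : ℕ) (hi : i < n) (S' : Finset (Fin n))
    (hS'b : ∀ t ∈ S', (t : ℕ) < i) (hinj' : Set.InjOn g ↑S') :
    ∑ S ∈ univ.filter (fun S : Finset (Fin n) => Set.InjOn g ↑S ∧ (⟨i, hi⟩ : Fin n) ∈ S ∧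
        S.filter (fun t : Fin n => (t : ℕ) < i) = S'),
      worldProb g p S ≤ worldProbI g p i S' := by
  set i0 : Fin n := ⟨i, hi⟩ with hi0
  by_cases ha0 : g i0 ∈ S'.image g
  · have hempty : univ.filter (fun S : Finset (Fin n) => Set.InjOn g ↑S ∧ i0 ∈ S ∧
        S.filter (fun t : Fin n => (t : ℕ) < i) = S') = ∅ := by
      refine eq_empty_of_forall_notMem fun S hS => ?_
      rw [mem_filter] at hS
      obtain ⟨-, hinj, hiS, hfil⟩ := hS
      obtain ⟨s, hs, hgs⟩ := mem_image.1 ha0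
      have hsS : s ∈ S := (mem_filter.1 (hfil ▸ hs)).1
      have hsi : (s : ℕ) < i := hS'b s hs
      have hse : s = i0 := hinj (mem_coe.2 hsS) (mem_coe.2 hiS) hgs
      rw [hse] at hsi
      exact absurd hsi (by simp [hi0])
    rw [hempty, sum_empty]
    exact worldProbI_nonneg g p hp hsum i S'
  · set a0 := g i0 with ha0def
    set A := (univ : Finset (Fin m)) \ insert a0 (S'.image g) with hA
    set D := univ.filter (fun t : Fin n => i < (t : ℕ) ∧ g t ∈ A) with hDdef
    have hDgA : ∀ t ∈ D, g t ∈ A := fun t ht => (mem_filter.1 ht).2.2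
    have hDgt : ∀ t ∈ D, i < (t : ℕ) := fun t ht => (mem_filter.1 ht).2.1
    have key : ∑ S ∈ univ.filter (fun S : Finset (Fin n) => Set.InjOn g ↑S ∧ i0 ∈ S ∧
          S.filter (fun t : Fin n => (t : ℕ) < i) = S'),
        worldProb g p S
        = ((∏ t ∈ S', p t) * p i0) *
            ∑ S'' ∈ D.powerset.filter (fun S : Finset (Fin n) => Set.InjOn g ↑S),
              (∏ t ∈ S'', p t) * ∏ a ∈ A \ S''.image g,
                (1 - ∑ t ∈ univ.filter (fun t : Fin n => g t = a), p t) := by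
      rw [mul_sum]
      refine sum_nbij' (i := fun S => S.filter (fun t : Fin n => i < (t : ℕ)))
        (j := fun S'' => S' ∪ insert i0 S'') ?_ ?_ ?_ ?_ ?_
      · -- maps to
        intro S hS
        simp only [mem_filter, mem_univ, true_and] at hS
        obtain ⟨hinj, hiS, hfil⟩ := hS
        rw [mem_filter, mem_powerset]
        constructor
        · intro t ht
          obtain ⟨htS, hti⟩ := mem_filter.1 ht
          rw [hDdef, mem_filter]
          refine ⟨mem_univ _, hti, ?_⟩
          rw [hA, mem_sdiff]
          refine ⟨mem_univ _, fun hmem => ?_⟩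
          rcases mem_insert.1 hmem with h | h
          · have : t = i0 := hinj (mem_coe.2 htS) (mem_coe.2 hiS) h
            rw [this] at hti
            exact absurd hti (by simp [hi0])
          · obtain ⟨s, hs, hgs⟩ := mem_image.1 h
            have hsS : s ∈ S := (mem_filter.1 (hfil ▸ hs)).1
            have : s = t := hinj (mem_coe.2 hsS) (mem_coe.2 htS) hgs
            have := hS'b s hs
            omega
        · exact hinj.mono (by exact_mod_cast (filter_subset _ S))
      · -- maps back
        intro S'' hS''
        rw [mem_filter, mem_powerset] at hS''
        obtain ⟨hsub, hinj''⟩ := hS''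
        have hgne : ∀ t ∈ S'', g t ∉ insert a0 (S'.image g) := by
          intro t ht
          have := hDgA t (hsub ht)
          rw [hA, mem_sdiff] at this
          exact this.2
        have hti : ∀ t ∈ S'', i < (t : ℕ) := fun t ht => hDgt t (hsub ht)
        simp only [mem_filter, mem_univ, true_and]
        refine ⟨?_, mem_union_right _ (mem_insert_self _ _), ?_⟩
        · intro x hx y hy hxy
          rw [mem_coe, mem_union, mem_insert] at hx hy
          have himg : ∀ s ∈ S', g s ∈ S'.image g := fun s hs => mem_image.2 ⟨s, hs, rfl⟩
          rcases hx with hx | hx | hx <;> rcases hy with hy | hy | hy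
          · exact hinj' (mem_coe.2 hx) (mem_coe.2 hy) hxy
          · subst hy; exact absurd (hxy ▸ himg x hx : g i0 ∈ S'.image g) ha0
          · exact absurd (hxy ▸ himg x hx) (fun h => hgne y hy (mem_insert_of_mem h))
          · subst hx; exact absurd (hxy.symm ▸ himg y hy : g i0 ∈ S'.image g) ha0
          · subst hx; subst hy; rfl
          · subst hx; exact absurd (hxy ▸ rfl : g y = a0) (fun h => hgne y hy (h ▸ mem_insert_self _ _))
          · exact absurd (hxy.symm ▸ himg y hy) (fun h => hgne x hx (mem_insert_of_mem h))
          · subst hy; exact absurd (hxy : g x = a0) (fun h => hgne x hx (h ▸ mem_insert_self _ _))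
          · exact hinj'' (mem_coe.2 hx) (mem_coe.2 hy) hxy
        · ext t
          rw [mem_filter, mem_union, mem_insert]
          constructor
          · rintro ⟨h | h | h, hlt⟩
            · exact h
            · subst h; exact absurd hlt (by simp [hi0])
            · exact absurd hlt (by have := hti t h; omega)
          · intro ht
            exact ⟨Or.inl ht, hS'b t ht⟩
      · -- left inverse
        intro S hS
        simp only [mem_filter, mem_univ, true_and] at hS
        obtain ⟨hinj, hiS, hfil⟩ := hS
        ext t
        rw [mem_union, mem_insert]
        constructor
        · rintro (h | h | h)
          · exact (mem_filter.1 (hfil ▸ h)).1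
          · subst h; exact hiS
          · exact (mem_filter.1 h).1
        · intro ht
          rcases lt_trichotomy (t : ℕ) i with h | h | h
          · exact Or.inl (hfil ▸ mem_filter.2 ⟨ht, h⟩)
          · exact Or.inr (Or.inl (Fin.ext (by simpa [hi0] using h)))
          · exact Or.inr (Or.inr (mem_filter.2 ⟨ht, h⟩))
      ·
        intro S'' hS''
        rw [mem_filter, mem_powerset] at hS''
        have hti : ∀ t ∈ S'', i < (t : ℕ) := fun t ht => hDgt t (hS''.1 ht)
        ext t
        rw [mem_filter, mem_union, mem_insert]
        constructor
        · rintro ⟨h | h | h, hlt⟩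
          · exact absurd hlt (by have := hS'b t h; omega)
          · subst h; exact absurd hlt (by simp [hi0])
          · exact h
        · intro ht
          exact ⟨Or.inr (Or.inr ht), hti t ht⟩
      · -- value equality
        intro S hS
        simp only [mem_filter, mem_univ, true_and] at hS
        obtain ⟨hinj, hiS, hfil⟩ := hS
        set S'' := S.filter (fun t : Fin n => i < (t : ℕ)) with hS''def
        have hi0nS'' : i0 ∉ S'' := by
          intro h
          exact absurd (mem_filter.1 h).2 (by simp [hi0])
        have hdisj1 : Disjoint S' (insert i0 S'') := by
          rw [disjoint_left]
          intro t ht hmem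
          have h1 := hS'b t ht
          rcases mem_insert.1 hmem with h | h
          · subst h; exact absurd h1 (by simp [hi0])
          · exact absurd (mem_filter.1 h).2 (by omega)
        have hSdec : S = S' ∪ insert i0 S'' := by
          ext t
          rw [mem_union, mem_insert]
          constructor
          · intro ht
            rcases lt_trichotomy (t : ℕ) i with h | h | h
            · exact Or.inl (hfil ▸ mem_filter.2 ⟨ht, h⟩)
            · exact Or.inr (Or.inl (Fin.ext (by simpa [hi0] using h)))
            · exact Or.inr (Or.inr (mem_filter.2 ⟨ht, h⟩))
          · rintro (h | h | h)
            · exact (mem_filter.1 (hfil ▸ h)).1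
            · subst h; exact hiS
            · exact (mem_filter.1 h).1
        have himS : S.image g = (S'.image g) ∪ insert a0 (S''.image g) := by
          rw [hSdec, image_union, image_insert]
        have hsetsA : (univ : Finset (Fin m)) \ S.image g = A \ S''.image g := by
          rw [himS, hA]
          ext b
          simp only [mem_sdiff, mem_univ, true_and, mem_union, mem_insert, not_or]
          tauto
        rw [worldProb, filt_eq_sdiff, hsetsA]
        conv_lhs => rw [hSdec]
        rw [prod_union hdisj1, prod_insert hi0nS'']
        ring
    rw [key, master' g p _ A D hDgA]
    have hfac : ∀ a ∈ A, ((1 - ∑ t ∈ univ.filter (fun t : Fin n => g t = a), p t)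
        + ∑ t ∈ D.filter (fun t => g t = a), p t) = 1 - rho g p i a := by
      intro a haA
      have hane : a ≠ a0 := fun h => (mem_sdiff.1 haA).2 (by rw [h]; exact mem_insert_self _ _)
      have hsplit : univ.filter (fun t : Fin n => g t = a)
          = univ.filter (fun t : Fin n => (t : ℕ) < i ∧ g t = a)
            ∪ D.filter (fun t => g t = a) := by
        ext t
        simp only [mem_filter, mem_union, mem_univ, true_and, hDdef]
        constructor
        · intro hgt
          rcases lt_trichotomy (t : ℕ) i with h | h | h
          · exact Or.inl ⟨h, hgt⟩
          · have hte : t = i0 := Fin.ext (by simpa [hi0] using h)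
            exact absurd (hte ▸ hgt : g i0 = a) (fun hh => hane (hh.symm))
          · exact Or.inr ⟨⟨h, by rw [hgt]; exact haA⟩, hgt⟩
        · rintro (⟨-, h⟩ | ⟨-, h⟩) <;> exact h
      have hdis : Disjoint (univ.filter (fun t : Fin n => (t : ℕ) < i ∧ g t = a))
          (D.filter (fun t => g t = a)) := by
        rw [disjoint_left]
        intro t h1 h2
        have := (mem_filter.1 h1).2.1
        have := hDgt t (mem_of_mem_filter t h2)
        omega
      have hsu : ∑ t ∈ univ.filter (fun t : Fin n => g t = a), p t
          = rho g p i a + ∑ t ∈ D.filter (fun t => g t = a), p t := by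
        rw [hsplit, sum_union hdis, rho]
      rw [hsu]; ring
    rw [prod_congr rfl hfac]
    have huniv : (univ : Finset (Fin m)) \ S'.image g = insert a0 A := by
      ext b
      constructor
      · intro hb
        have hb' := (mem_sdiff.1 hb).2
        by_cases hba : b = a0
        · rw [hba]; exact mem_insert_self _ _
        · refine mem_insert_of_mem (mem_sdiff.2 ⟨mem_univ _, fun hmem => ?_⟩)
          rcases mem_insert.1 hmem with h | h
          · exact hba h
          · exact hb' h
      · intro hb
        rcases mem_insert.1 hb with rfl | hbA
        · exact mem_sdiff.2 ⟨mem_univ _, ha0⟩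
        · exact mem_sdiff.2 ⟨mem_univ _, fun h => (mem_sdiff.1 hbA).2 (mem_insert_of_mem h)⟩
    have ha0A : a0 ∉ A := by
      rw [hA, mem_sdiff]
      intro h
      exact h.2 (mem_insert_self _ _)
    rw [worldProbI, filt_eq_sdiff, huniv, prod_insert ha0A]
    have hP1 : 0 ≤ ∏ t ∈ S', p t := prod_nonneg fun t _ => hp t
    have hP2 : 0 ≤ ∏ a ∈ A, (1 - rho g p i a) := by
      refine prod_nonneg fun a _ => ?_
      have := rho_le_one g p hp hsum i a
      linarith
    have hpi0 : p i0 ≤ 1 - rho g p i a0 := by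
      have hsub : univ.filter (fun t : Fin n => (t : ℕ) < i ∧ g t = a0) ∪ {i0}
          ⊆ univ.filter (fun t : Fin n => g t = a0) := by
        intro t ht
        rcases mem_union.1 ht with h | h
        · exact mem_filter.2 ⟨mem_univ t, (mem_filter.1 h).2.2⟩
        · rw [mem_singleton.1 h]
          exact mem_filter.2 ⟨mem_univ _, rfl⟩
      have hdis : Disjoint (univ.filter (fun t : Fin n => (t : ℕ) < i ∧ g t = a0))
          ({i0} : Finset (Fin n)) := by
        rw [disjoint_left]
        intro t h1 h2
        rw [mem_singleton.1 h2] at h1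
        exact absurd (mem_filter.1 h1).2.1 (by simp [hi0])
      have h1 : rho g p i a0 + p i0 ≤ ∑ t ∈ univ.filter (fun t : Fin n => g t = a0), p t := by
        rw [rho, ← sum_singleton (f := p) i0, ← sum_union hdis]
        exact sum_le_sum_of_subset_of_nonneg hsub fun t _ _ => hp t
      have h2 := hsum a0
      linarith
    calc (∏ t ∈ S', p t) * p i0 * ∏ a ∈ A, (1 - rho g p i a)
        ≤ (∏ t ∈ S', p t) * (1 - rho g p i a0) * ∏ a ∈ A, (1 - rho g p i a) := by
          refine mul_le_mul_of_nonneg_right (mul_le_mul_of_nonneg_left hpi0 hP1) hP2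
      _ = (∏ t ∈ S', p t) * ((1 - rho g p i a0) * ∏ a ∈ A, (1 - rho g p i a)) := by ring

lemma pij_card {n : ℕ} (i : ℕ) (S : Finset (Fin n)) :
    (filter (fun t => t < i) ((do let a ← S; pure ((a : ℕ))) : Finset ℕ)).card
      = (S.filter (fun t : Fin n => (t : ℕ) < i)).card := by
  have h1 : ((do let a ← S; pure ((a : ℕ))) : Finset ℕ)
      = S.image (fun t : Fin n => (t : ℕ)) := by
    ext x; simp [Bind.bind, Pure.pure]
  rw [h1, filter_image, card_image_of_injective _ Fin.val_injective]

/-- Upper bound on the top-`k` probability of the next tuple: `tkp_k(t_{i+1})` is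
bounded by the partial sum `Σ_{j<k} r_{i,j}` of the count distribution of the
seen tuples, where `r_{i,j} = PB_j(ρ_i(1),…,ρ_i(m))`. -/
theorem tkp_le_partial_sum (n m : ℕ) (g : Fin n → Fin m) (p : Fin n → ℝ)
    (hp : ∀ t, 0 ≤ p t)
    (hsum : ∀ a : Fin m, ∑ t ∈ Finset.univ.filter (fun t : Fin n => g t = a), p t ≤ 1)
    (i : ℕ) (hi : i < n) (k : ℕ) (hk : 1 ≤ k) :
    tkp g p k ⟨i, hi⟩ ≤ ∑ j ∈ Finset.range k, PB Finset.univ (rho g p i) j := by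
  classical
  have h1 : tkp g p k ⟨i, hi⟩ = ∑ j ∈ Finset.range k, pij g p ⟨i, hi⟩ (j + 1) := by
    rw [tkp]
    refine sum_nbij' (i := fun j => j - 1) (j := fun j => j + 1) ?_ ?_ ?_ ?_ ?_
    · intro j hj; rw [mem_Icc] at hj; rw [mem_range]; omega
    · intro j hj; rw [mem_range] at hj; rw [mem_Icc]; omega
    · intro j hj; rw [mem_Icc] at hj; omega
    · intro j _; omega
    · intro j hj; rw [mem_Icc] at hj; congr 1; omega
  set G := univ.filter (fun S : Finset (Fin n) => Set.InjOn g ↑S ∧ (⟨i, hi⟩ : Fin n) ∈ S ∧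
      (S.filter (fun t : Fin n => (t : ℕ) < i)).card < k) with hG
  have hmapsG : ∀ S ∈ G, (S.filter (fun t : Fin n => (t : ℕ) < i)).card ∈ range k :=
    fun S hS => mem_range.2 (mem_filter.1 hS).2.2.2
  have hpij : ∀ j : ℕ, pij g p ⟨i, hi⟩ (j + 1)
      = ∑ S ∈ univ.filter (fun S : Finset (Fin n) =>
          Set.InjOn g ↑S ∧ (⟨i, hi⟩ : Fin n) ∈ S ∧
          (S.filter (fun t : Fin n => (t : ℕ) < i)).card = j), worldProb g p S := by
    intro j
    rw [pij]
    congr 1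
    ext S
    simp only [mem_filter, mem_univ, true_and, pij_card, Fin.val_mk]
    constructor
    · rintro ⟨hinj, hiS, hc⟩
      exact ⟨hinj, hiS, by omega⟩
    · rintro ⟨hinj, hiS, hc⟩
      exact ⟨hinj, hiS, by omega⟩
  have h3 : ∑ j ∈ Finset.range k, pij g p ⟨i, hi⟩ (j + 1) = ∑ S ∈ G, worldProb g p S := by
    rw [← sum_fiberwise_of_maps_to hmapsG (worldProb g p)]
    refine sum_congr rfl fun j hj => ?_
    rw [mem_range] at hj
    rw [hpij j]
    congr 1
    ext S
    simp only [hG, mem_filter, mem_univ, true_and]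
    constructor
    · rintro ⟨hinj, hiS, hc⟩
      exact ⟨⟨hinj, hiS, by omega⟩, hc⟩
    · rintro ⟨⟨hinj, hiS, -⟩, hc⟩
      exact ⟨hinj, hiS, hc⟩
  set B := ((univ.filter (fun t : Fin n => (t : ℕ) < i)).powerset.filter
      (fun S' : Finset (Fin n) => Set.InjOn g ↑S' ∧ S'.card < k)) with hB
  have hmapsB : ∀ S ∈ G, S.filter (fun t : Fin n => (t : ℕ) < i) ∈ B := by
    intro S hS
    rw [hG, mem_filter] at hS
    obtain ⟨-, hinj, -, hc⟩ := hS
    rw [hB, mem_filter, mem_powerset]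
    refine ⟨fun t ht => mem_filter.2 ⟨mem_univ _, (mem_filter.1 ht).2⟩, ?_, hc⟩
    exact hinj.mono (by exact_mod_cast filter_subset _ S)
  have h4 : ∑ S ∈ G, worldProb g p S
      = ∑ S' ∈ B, ∑ S ∈ G.filter
          (fun S => S.filter (fun t : Fin n => (t : ℕ) < i) = S'), worldProb g p S :=
    (sum_fiberwise_of_maps_to hmapsB (worldProb g p)).symm
  have h5 : ∀ S' ∈ B, ∑ S ∈ G.filter
        (fun S => S.filter (fun t : Fin n => (t : ℕ) < i) = S'), worldProb g p S
      ≤ worldProbI g p i S' := by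
    intro S' hS'
    rw [hB, mem_filter, mem_powerset] at hS'
    obtain ⟨hsub, hinj', hck⟩ := hS'
    have hfib : G.filter (fun S => S.filter (fun t : Fin n => (t : ℕ) < i) = S')
        = univ.filter (fun S : Finset (Fin n) => Set.InjOn g ↑S ∧ (⟨i, hi⟩ : Fin n) ∈ S ∧
            S.filter (fun t : Fin n => (t : ℕ) < i) = S') := by
      ext S
      simp only [hG, mem_filter, mem_univ, true_and]
      constructor
      · rintro ⟨⟨hinj, hiS, -⟩, hπ⟩
        exact ⟨hinj, hiS, hπ⟩
      · rintro ⟨hinj, hiS, hπ⟩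
        exact ⟨⟨hinj, hiS, by rw [hπ]; exact hck⟩, hπ⟩
    rw [hfib]
    exact lemB g p hp hsum i hi S'
      (fun t ht => (mem_filter.1 (hsub ht)).2) hinj'
  have h6 : ∑ S' ∈ B, worldProbI g p i S' = ∑ j ∈ Finset.range k, PB univ (rho g p i) j := by
    have hmaps2 : ∀ S' ∈ B, S'.card ∈ range k :=
      fun S' hS' => mem_range.2 (mem_filter.1 hS').2.2
    rw [← sum_fiberwise_of_maps_to hmaps2 (worldProbI g p i)]
    refine sum_congr rfl fun j hj => ?_
    rw [mem_range] at hj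
    have hset : B.filter (fun S' => S'.card = j)
        = (univ.filter (fun t : Fin n => (t : ℕ) < i)).powerset.filter
            (fun S : Finset (Fin n) => Set.InjOn g ↑S ∧ S.card = j) := by
      ext S'
      simp only [hB, mem_filter, mem_powerset]
      constructor
      · rintro ⟨⟨hsub, hinj, -⟩, hc⟩
        exact ⟨hsub, hinj, hc⟩
      · rintro ⟨hsub, hinj, hc⟩
        exact ⟨⟨hsub, hinj, by omega⟩, hc⟩
    rw [hset, lemA]
  calc tkp g p k ⟨i, hi⟩ = ∑ S ∈ G, worldProb g p S := by rw [h1, h3]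
    _ = ∑ S' ∈ B, ∑ S ∈ G.filter
          (fun S => S.filter (fun t : Fin n => (t : ℕ) < i) = S'), worldProb g p S := h4
    _ ≤ ∑ S' ∈ B, worldProbI g p i S' := sum_le_sum h5
    _ = ∑ j ∈ Finset.range k, PB univ (rho g p i) j := h6
end

section
/- Tightness of the upper bound: for 0 ≤ i < n and k ≥ 1, if p(i+1) = 1 (which forces ρ_i(g(i+1)) = 0), then tkp_k(i+1) = Σ_{j=0}^{k−1} r_{i,j}; hence the bound tkp_k(i+1) ≤ Σ_{j=0}^{k−1} r_{i,j} is tight for an arbitrary sequence of tuples. -/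
open Finset
open scoped Classical

lemma sum_powerset_union' {α M : Type*} [DecidableEq α] [AddCommMonoid M]
    (s t : Finset α) (hd : Disjoint s t) (f : Finset α → M) :
    ∑ u ∈ (s ∪ t).powerset, f u = ∑ v ∈ s.powerset, ∑ w ∈ t.powerset, f (v ∪ w) := by
  induction s using Finset.induction_on generalizing f with
  | empty => simp
  | @insert a s ha ih =>
    have hd' : Disjoint s t := Finset.disjoint_insert_left.mp hd |>.2
    have hat : a ∉ t := Finset.disjoint_insert_left.mp hd |>.1
    have h1 : a ∉ s ∪ t := by simp [ha, hat]
    rw [Finset.insert_union, Finset.sum_powerset_insert h1, ih hd' f,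
      Finset.sum_powerset_insert ha, ih hd' (fun u => f (insert a u))]
    congr 1
    refine Finset.sum_congr rfl fun v hv => Finset.sum_congr rfl fun w hw => ?_
    rw [Finset.insert_union]

lemma sum_powerset_card_le_one {α M : Type*} [DecidableEq α] [AddCommMonoid M]
    (s : Finset α) (f : Finset α → M)
    (h : ∀ T ∈ s.powerset, 1 < T.card → f T = 0) :
    ∑ T ∈ s.powerset, f T = f ∅ + ∑ a ∈ s, f {a} := by
  induction s using Finset.induction_on with
  | empty => simp
  | @insert a s ha ih =>
    rw [Finset.sum_powerset_insert ha, ih (fun T hT hc => h T (by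
      rw [Finset.mem_powerset] at hT ⊢; exact hT.trans (Finset.subset_insert a s)) hc)]
    have h2 : ∑ T ∈ s.powerset, f (insert a T) = f {a} := by
      rw [Finset.sum_eq_single ∅]
      · simp
      · intro T hT hne
        rw [Finset.mem_powerset] at hT
        apply h (insert a T) (by rw [Finset.mem_powerset]; exact Finset.insert_subset_insert a hT)
        have : T.Nonempty := Finset.nonempty_iff_ne_empty.mpr hne
        have := Finset.card_pos.mpr this
        have haT : a ∉ T := fun hmem => ha (hT hmem)
        rw [Finset.card_insert_of_notMem haT]
        omega
      · intro h'
        simp at h'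
    rw [h2, Finset.sum_insert ha]
    abel

lemma workhorse {n m : ℕ} (g : Fin n → Fin m) (p : Fin n → ℝ) (w : Fin m → ℝ)
    (A : Finset (Fin m)) :
    ∀ (E : Finset (Fin n)), (∀ t ∈ E, g t ∈ A) →
    ∑ T ∈ E.powerset,
      (if Set.InjOn g ↑T then (∏ t ∈ T, p t) * ∏ a ∈ A \ T.image g, w a else 0)
    = ∏ a ∈ A, (w a + ∑ t ∈ E.filter (fun t => g t = a), p t) := by
  induction A using Finset.induction_on with
  | empty =>
    intro E hE
    have : E = ∅ := Finset.eq_empty_of_forall_notMem (fun t ht => by simpa using hE t ht)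
    subst this
    simp
  | @insert a A ha ih =>
    intro E hE
    set Ea := E.filter (fun t => g t = a) with hEa
    set E' := E.filter (fun t => ¬ g t = a) with hE'
    have hunion : Ea ∪ E' = E := Finset.filter_union_filter_not_eq _ E
    have hdisj : Disjoint Ea E' := Finset.disjoint_filter_filter_not E E _
    have hE'A : ∀ t ∈ E', g t ∈ A := by
      intro t ht
      rw [hE', Finset.mem_filter] at ht
      have := hE t ht.1
      rw [Finset.mem_insert] at this
      tauto
    set F : Finset (Fin n) → ℝ := fun T =>
      if Set.InjOn g ↑T then (∏ t ∈ T, p t) * ∏ b ∈ insert a A \ T.image g, w b else 0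
      with hF
    have key : ∀ T' ∈ E'.powerset, a ∉ T'.image g := by
      intro T' hT'
      rw [Finset.mem_powerset] at hT'
      simp only [Finset.mem_image, not_exists]
      intro t ht
      exact (Finset.mem_filter.mp (hT' ht.1)).2 ht.2
    calc ∑ T ∈ E.powerset, F T
        = ∑ Ta ∈ Ea.powerset, ∑ T' ∈ E'.powerset, F (Ta ∪ T') := by
          rw [← hunion, sum_powerset_union' _ _ hdisj]
      _ = (∑ T' ∈ E'.powerset, F (∅ ∪ T'))
          + ∑ t ∈ Ea, ∑ T' ∈ E'.powerset, F ({t} ∪ T') := by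
          apply sum_powerset_card_le_one
          intro Ta hTa hcard
          rw [Finset.mem_powerset] at hTa
          obtain ⟨t₁, ht₁, t₂, ht₂, hne⟩ := Finset.one_lt_card.mp hcard
          apply Finset.sum_eq_zero
          intro T' hT'
          rw [hF]
          simp only
          rw [if_neg]
          intro hinj
          have e1 : g t₁ = a := (Finset.mem_filter.mp (hTa ht₁)).2
          have e2 : g t₂ = a := (Finset.mem_filter.mp (hTa ht₂)).2
          exact hne (hinj (by simp [ht₁]) (by simp [ht₂]) (e1.trans e2.symm))
      _ = (w a + ∑ t ∈ Ea, p t) * ∏ b ∈ A, (w b + ∑ t ∈ E'.filter (fun t => g t = b), p t) := by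
          have h0 : ∑ T' ∈ E'.powerset, F (∅ ∪ T')
              = w a * ∏ b ∈ A, (w b + ∑ t ∈ E'.filter (fun t => g t = b), p t) := by
            rw [← ih E' hE'A, Finset.mul_sum]
            apply Finset.sum_congr rfl
            intro T' hT'
            rw [hF]
            simp only [Finset.empty_union]
            have hna : a ∉ T'.image g := key T' hT'
            rw [Finset.insert_sdiff_of_notMem _ hna,
              Finset.prod_insert (by simp [ha])]
            split
            · ring
            · ring
          have h1 : ∀ t ∈ Ea, ∑ T' ∈ E'.powerset, F ({t} ∪ T')
              = p t * ∏ b ∈ A, (w b + ∑ t ∈ E'.filter (fun t => g t = b), p t) := by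
            intro t ht
            have hgt : g t = a := (Finset.mem_filter.mp ht).2
            rw [← ih E' hE'A, Finset.mul_sum]
            apply Finset.sum_congr rfl
            intro T' hT'
            have htT' : t ∉ T' := by
              intro hmem
              rw [Finset.mem_powerset] at hT'
              exact (Finset.mem_filter.mp (hT' hmem)).2 hgt
            have hna : a ∉ T'.image g := key T' hT'
            rw [hF]
            simp only
            rw [← Finset.insert_eq]
            have hinj_iff : Set.InjOn g ↑(insert t T') ↔ Set.InjOn g ↑T' := by
              rw [Finset.coe_insert, Set.injOn_insert (by simpa using htT')]
              constructor
              · exact fun h => h.1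
              · intro h
                refine ⟨h, ?_⟩
                rw [hgt]
                intro hmem
                apply hna
                obtain ⟨x, hx, hgx⟩ := hmem
                exact Finset.mem_image.mpr ⟨x, by simpa using hx, hgx⟩
            rw [Finset.prod_insert htT', Finset.image_insert, hgt]
            have hsd : insert a A \ insert a (T'.image g) = A \ T'.image g := by
              ext x
              simp only [Finset.mem_sdiff, Finset.mem_insert, not_or]
              constructor
              · rintro ⟨hx1, hx2, hx3⟩
                exact ⟨hx1.resolve_left hx2, hx3⟩
              · rintro ⟨hx1, hx2⟩
                exact ⟨Or.inr hx1, fun h => ha (h ▸ hx1), hx2⟩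
            rw [hsd, if_congr hinj_iff rfl rfl]
            split
            · ring
            · ring
          rw [h0, Finset.sum_congr rfl h1, ← Finset.sum_mul]
          ring
      _ = ∏ b ∈ insert a A, (w b + ∑ t ∈ E.filter (fun t => g t = b), p t) := by
          rw [Finset.prod_insert ha]
          congr 1
          apply Finset.prod_congr rfl
          intro b hb
          have hba : b ≠ a := fun h => ha (h ▸ hb)
          congr 1
          rw [hE', Finset.filter_filter]
          apply Finset.sum_congr _ (fun _ _ => rfl)
          apply Finset.filter_congr
          intro x hx
          constructor
          · exact fun h => h.2
          · intro h
            exact ⟨fun h' => hba (h' ▸ h).symm, h⟩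

lemma hfilt {n m : ℕ} (g : Fin n → Fin m) (S : Finset (Fin n)) :
    Finset.univ.filter (fun a : Fin m => ∀ t ∈ S, g t ≠ a) = Finset.univ \ S.image g := by
  ext a
  rw [Finset.mem_filter, Finset.mem_sdiff]
  simp only [Finset.mem_univ, true_and, Finset.mem_image, not_exists]
  constructor
  · intro h x hx
    exact h x hx.1 hx.2
  · intro h t ht he
    exact h t ⟨ht, he⟩


lemma innerC {n m : ℕ} (g : Fin n → Fin m) (p : Fin n → ℝ) (i : ℕ) (B : Finset (Fin n))
    (hB : B ⊆ Finset.univ.filter (fun t : Fin n => (t : ℕ) ≤ i)) :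
    ∑ T ∈ (Finset.univ.filter (fun t : Fin n => ¬ (t : ℕ) ≤ i)).powerset,
      (if Set.InjOn g ↑(B ∪ T) then worldProb g p (B ∪ T) else 0)
    = if Set.InjOn g ↑B then worldProbI g p (i + 1) B else 0 := by
  set tl := Finset.univ.filter (fun t : Fin n => ¬ (t : ℕ) ≤ i) with htl
  by_cases hinjB : Set.InjOn g ↑B
  case neg =>
    rw [if_neg hinjB]
    apply Finset.sum_eq_zero
    intro T hT
    rw [if_neg]
    intro h
    exact hinjB (h.mono (by rw [Finset.coe_union]; exact Set.subset_union_left))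
  case pos =>
    rw [if_pos hinjB]
    set A := (Finset.univ : Finset (Fin m)) \ B.image g with hA
    set E := tl.filter (fun t => g t ∉ B.image g) with hEdef
    have hEtl : E ⊆ tl := Finset.filter_subset _ _
    have hdisjBT : ∀ T ⊆ tl, Disjoint B T := by
      intro T hT
      rw [Finset.disjoint_left]
      intro x hxB hxT
      exact (Finset.mem_filter.mp (hT hxT)).2 (Finset.mem_filter.mp (hB hxB)).2
    have vanish : ∀ T ∈ tl.powerset, T ∉ E.powerset →
        (if Set.InjOn g ↑(B ∪ T) then worldProb g p (B ∪ T) else 0) = 0 := by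
      intro T hT hTE
      rw [Finset.mem_powerset] at hT hTE
      rw [if_neg]
      intro hinj
      obtain ⟨t, htT, htE⟩ := Finset.not_subset.mp hTE
      have hgt : g t ∈ B.image g := by
        by_contra hc
        exact htE (Finset.mem_filter.mpr ⟨hT htT, hc⟩)
      obtain ⟨t', ht'B, hgt'⟩ := Finset.mem_image.mp hgt
      have heq : t' = t := hinj
        (Finset.mem_coe.mpr (Finset.mem_union_left _ ht'B))
        (Finset.mem_coe.mpr (Finset.mem_union_right _ htT)) hgt'
      exact (Finset.disjoint_left.mp (hdisjBT T hT) (heq ▸ ht'B)) htT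
    rw [← Finset.sum_subset (Finset.powerset_mono.mpr hEtl) vanish]
    have hsummand : ∀ T ∈ E.powerset,
        (if Set.InjOn g ↑(B ∪ T) then worldProb g p (B ∪ T) else 0)
        = (∏ t ∈ B, p t) * (if Set.InjOn g ↑T then (∏ t ∈ T, p t) *
            ∏ a ∈ A \ T.image g,
              (1 - ∑ t ∈ Finset.univ.filter (fun t : Fin n => g t = a), p t) else 0) := by
      intro T hT
      rw [Finset.mem_powerset] at hT
      have hTtl : T ⊆ tl := hT.trans hEtl
      have hdisj := hdisjBT T hTtl
      have hiff : Set.InjOn g ↑(B ∪ T) ↔ Set.InjOn g ↑T := by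
        rw [Finset.coe_union, Set.injOn_union (Finset.disjoint_coe.mpr hdisj)]
        constructor
        · exact fun h => h.2.1
        · intro h
          refine ⟨hinjB, h, ?_⟩
          intro x hx y hy hne
          have hgy : g y ∉ B.image g := (Finset.mem_filter.mp (hT hy)).2
          exact hgy (hne ▸ Finset.mem_image_of_mem g hx)
      rw [if_congr hiff rfl rfl, mul_ite, mul_zero]
      split_ifs with hI
      swap
      · rfl
      · rw [worldProb, hfilt, Finset.image_union, Finset.prod_union hdisj]
        have hsd : Finset.univ \ (B.image g ∪ T.image g) = A \ T.image g := by
          ext x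
          simp [hA, not_or]
        rw [hsd]
        ring
    rw [Finset.sum_congr rfl hsummand, ← Finset.mul_sum]
    have hEA : ∀ t ∈ E, g t ∈ A := by
      intro t ht
      rw [hA, Finset.mem_sdiff]
      exact ⟨Finset.mem_univ _, (Finset.mem_filter.mp ht).2⟩
    rw [workhorse g p _ A E hEA]
    rw [worldProbI, hfilt]
    congr 1
    apply Finset.prod_congr rfl
    intro a haA
    have hanb : a ∉ B.image g := (Finset.mem_sdiff.mp haA).2
    have hEf : E.filter (fun t => g t = a) = tl.filter (fun t => g t = a) := by
      rw [hEdef, Finset.filter_filter]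
      apply Finset.filter_congr
      intro t _
      constructor
      · exact fun h => h.2
      · intro h
        exact ⟨fun hc => hanb (h ▸ hc), h⟩
    have hsplit : rho g p (i + 1) a + ∑ t ∈ tl.filter (fun t => g t = a), p t
        = ∑ t ∈ Finset.univ.filter (fun t : Fin n => g t = a), p t := by
      have := Finset.sum_filter_add_sum_filter_not
        (Finset.univ.filter (fun t : Fin n => g t = a)) (fun t => (t : ℕ) ≤ i) p
      have e1 : (Finset.univ.filter (fun t : Fin n => g t = a)).filter (fun t : Fin n => (t : ℕ) ≤ i)
          = Finset.univ.filter (fun t : Fin n => (t : ℕ) < i + 1 ∧ g t = a) := by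
        rw [Finset.filter_filter]
        apply Finset.filter_congr
        intro t _
        simp [Nat.lt_succ_iff, and_comm]
      have e2 : (Finset.univ.filter (fun t : Fin n => g t = a)).filter (fun t : Fin n => ¬ (t : ℕ) ≤ i)
          = tl.filter (fun t => g t = a) := by
        rw [htl, Finset.filter_filter, Finset.filter_filter]
        apply Finset.filter_congr
        intro t _
        simp [and_comm]
      rw [e1, e2] at this
      rw [rho, ← this]
    rw [hEf]
    linarith

lemma PBstep {n m : ℕ} (g : Fin n → Fin m) (p : Fin n → ℝ) (i j' : ℕ) :
    PB Finset.univ (rho g p i) j'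
    = ∑ B ∈ (Finset.univ.filter (fun t : Fin n => (t : ℕ) < i)).powerset,
        (if Set.InjOn g ↑B ∧ B.card = j'
         then (∏ t ∈ B, p t) * ∏ a ∈ Finset.univ \ B.image g, (1 - rho g p i a) else 0) := by
  set below := Finset.univ.filter (fun t : Fin n => (t : ℕ) < i) with hbelow
  have claimT : ∀ T ∈ (Finset.univ : Finset (Fin m)).powersetCard j',
      (∏ a ∈ T, rho g p i a)
      = ∑ B ∈ below.powerset,
          (if Set.InjOn g ↑B ∧ B.image g = T then ∏ t ∈ B, p t else 0) := by
    intro T hT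
    set E := below.filter (fun t => g t ∈ T) with hE
    have hET : ∀ t ∈ E, g t ∈ T := fun t ht => (Finset.mem_filter.mp ht).2
    have hw := workhorse g p (fun _ => (0 : ℝ)) T E hET
    have hRHS : ∏ a ∈ T, ((fun _ => (0:ℝ)) a + ∑ t ∈ E.filter (fun t => g t = a), p t)
        = ∏ a ∈ T, rho g p i a := by
      apply Finset.prod_congr rfl
      intro a haT
      rw [zero_add, rho]
      congr 1
      ext t
      simp only [hE, hbelow, Finset.mem_filter, Finset.mem_univ, true_and]
      aesop
    have hLHS : ∀ B ∈ E.powerset,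
        (if Set.InjOn g ↑B then (∏ t ∈ B, p t) * ∏ a ∈ T \ B.image g, (fun _ => (0:ℝ)) a else 0)
        = (if Set.InjOn g ↑B ∧ B.image g = T then ∏ t ∈ B, p t else 0) := by
      intro B hB
      rw [Finset.mem_powerset] at hB
      have hsub : B.image g ⊆ T := by
        intro a ha
        obtain ⟨t, ht, rfl⟩ := Finset.mem_image.mp ha
        exact hET t (hB ht)
      by_cases hinj : Set.InjOn g ↑B
      · by_cases himg : B.image g = T
        · rw [if_pos hinj, if_pos ⟨hinj, himg⟩, himg, Finset.sdiff_self,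
            Finset.prod_empty, mul_one]
        · rw [if_pos hinj, if_neg (fun h => himg h.2)]
          obtain ⟨a, haT, hanB⟩ := Finset.exists_of_ssubset (lt_of_le_of_ne hsub himg)
          rw [Finset.prod_eq_zero (Finset.mem_sdiff.mpr ⟨haT, hanB⟩) rfl, mul_zero]
      · rw [if_neg hinj, if_neg (fun h => hinj h.1)]
    rw [Finset.sum_congr rfl hLHS] at hw
    rw [hRHS] at hw
    rw [← hw]
    apply Finset.sum_subset (Finset.powerset_mono.mpr (Finset.filter_subset _ _))
    intro B hB hBE
    rw [Finset.mem_powerset] at hB hBE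
    obtain ⟨t, htB, htE⟩ := Finset.not_subset.mp hBE
    have hgt : g t ∉ T := by
      intro hc
      exact htE (Finset.mem_filter.mpr ⟨hB htB, hc⟩)
    rw [if_neg]
    rintro ⟨-, himg⟩
    exact hgt (himg ▸ Finset.mem_image_of_mem g htB)
  rw [PB]
  have step1 : ∀ T ∈ (Finset.univ : Finset (Fin m)).powersetCard j',
      (∏ a ∈ T, rho g p i a) * ∏ a ∈ Finset.univ \ T, (1 - rho g p i a)
      = ∑ B ∈ below.powerset,
          (if Set.InjOn g ↑B ∧ B.image g = T
           then (∏ t ∈ B, p t) * ∏ a ∈ Finset.univ \ B.image g, (1 - rho g p i a) else 0) := by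
    intro T hT
    rw [claimT T hT, Finset.sum_mul]
    apply Finset.sum_congr rfl
    intro B _
    rw [ite_mul, zero_mul]
    split_ifs with h
    · rw [h.2]
    · rfl
  rw [Finset.sum_congr rfl step1]
  set s := below.powerset.filter (fun B : Finset (Fin n) => Set.InjOn g ↑B ∧ B.card = j') with hs
  have step2 : ∀ T ∈ (Finset.univ : Finset (Fin m)).powersetCard j',
      (∑ B ∈ below.powerset,
          (if Set.InjOn g ↑B ∧ B.image g = T
           then (∏ t ∈ B, p t) * ∏ a ∈ Finset.univ \ B.image g, (1 - rho g p i a) else 0))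
      = ∑ B ∈ s.filter (fun B : Finset (Fin n) => B.image g = T),
          (∏ t ∈ B, p t) * ∏ a ∈ Finset.univ \ B.image g, (1 - rho g p i a) := by
    intro T hT
    rw [Finset.sum_filter]
    have hcardT : T.card = j' := (Finset.mem_powersetCard.mp hT).2
    rw [hs, Finset.sum_filter]
    apply Finset.sum_congr rfl
    intro B _
    by_cases h1 : Set.InjOn g ↑B
    · by_cases h2 : B.image g = T
      · rw [if_pos ⟨h1, h2⟩, if_pos ⟨h1, by rw [← Finset.card_image_of_injOn h1, h2, hcardT]⟩,
          if_pos h2]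
      · rw [if_neg (fun h => h2 h.2)]
        split_ifs with h3
        · rfl
        · rfl
    · rw [if_neg (fun h => h1 h.1), if_neg (fun h => h1 h.1)]
  rw [Finset.sum_congr rfl step2]
  rw [Finset.sum_fiberwise_of_maps_to (fun B hB => ?_)]
  · rw [hs, Finset.sum_filter]
  · rw [hs, Finset.mem_filter] at hB
    rw [Finset.mem_powersetCard]
    exact ⟨Finset.subset_univ _, by rw [Finset.card_image_of_injOn hB.2.1, hB.2.2]⟩

lemma card_do {n : ℕ} (S : Finset (Fin n)) (i : ℕ) :
    (Finset.filter (fun t : ℕ => t < i) (do let a ← S; pure ↑a)).card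
    = (S.filter (fun t : Fin n => (t : ℕ) < i)).card := by
  have h1 : (do let a ← S; pure ((a : Fin n) : ℕ) : Finset ℕ)
      = Finset.image (fun a : Fin n => (a : ℕ)) S := by
    ext x
    simp [Bind.bind, Finset.mem_biUnion]
  have h2 : Finset.filter (fun t : ℕ => t < i) (Finset.image (fun a : Fin n => (a : ℕ)) S)
      = Finset.image (fun a : Fin n => (a : ℕ)) (S.filter (fun t : Fin n => (t : ℕ) < i)) := by
    ext x
    simp only [Finset.mem_filter, Finset.mem_image]
    constructor
    · rintro ⟨⟨a, ha, rfl⟩, hlt⟩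
      exact ⟨a, ⟨ha, hlt⟩, rfl⟩
    · rintro ⟨a, ⟨ha, hlt⟩, rfl⟩
      exact ⟨⟨a, ha, rfl⟩, hlt⟩
  rw [h1, h2, Finset.card_image_of_injective _ Fin.val_injective]


lemma pijstep {n m : ℕ} (g : Fin n → Fin m) (p : Fin n → ℝ) (i : ℕ) (hi : i < n)
    (hp1 : p ⟨i, hi⟩ = 1) (j' : ℕ) :
    pij g p ⟨i, hi⟩ (j' + 1)
    = ∑ B ∈ (Finset.univ.filter (fun t : Fin n => (t : ℕ) < i)).powerset,
        (if Set.InjOn g ↑B ∧ g ⟨i, hi⟩ ∉ B.image g ∧ B.card = j'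
         then (∏ t ∈ B, p t) *
           ∏ a ∈ (Finset.univ \ B.image g) \ {g ⟨i, hi⟩}, (1 - rho g p i a) else 0) := by
  set i0 : Fin n := ⟨i, hi⟩ with hi0
  have hvi0 : (i0 : ℕ) = i := rfl
  set below := Finset.univ.filter (fun t : Fin n => (t : ℕ) < i) with hbelow
  set pre := Finset.univ.filter (fun t : Fin n => (t : ℕ) ≤ i) with hpre
  set tl := Finset.univ.filter (fun t : Fin n => ¬ (t : ℕ) ≤ i) with htl
  have hrho_succ : ∀ a : Fin m, a ≠ g i0 → rho g p (i + 1) a = rho g p i a := by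
    intro a ha
    rw [rho, rho]
    apply Finset.sum_congr _ (fun _ _ => rfl)
    ext t
    simp only [Finset.mem_filter, Finset.mem_univ, true_and]
    constructor
    · rintro ⟨h1, h2⟩
      refine ⟨?_, h2⟩
      rcases Nat.lt_succ_iff_lt_or_eq.mp h1 with h | h
      · exact h
      · exfalso
        have : t = i0 := Fin.ext h
        subst this
        exact ha h2.symm
    · rintro ⟨h1, h2⟩
      exact ⟨by omega, h2⟩
  have hpijset : (Finset.univ.filter (fun S : Finset (Fin n) =>
      Set.InjOn g ↑S ∧ i0 ∈ S ∧ (S.filter (fun t => (t : ℕ) < (i0 : ℕ))).card = j' + 1 - 1))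
      = (Finset.univ.filter (fun S : Finset (Fin n) =>
      Set.InjOn g ↑S ∧ i0 ∈ S ∧ (S.filter (fun t : Fin n => (t : ℕ) < i)).card = j')) := by
    apply Finset.filter_congr
    intro S _
    rw [card_do]
    exact Iff.rfl
  rw [pij, hpijset, Finset.sum_filter, ← Finset.powerset_univ,
    ← Finset.filter_union_filter_not_eq (fun t : Fin n => (t : ℕ) ≤ i) Finset.univ,
    sum_powerset_union' _ _ (Finset.disjoint_filter_filter_not _ _ _)]
  have inner : ∀ B ∈ pre.powerset,
      (∑ T ∈ tl.powerset,
        if Set.InjOn g ↑(B ∪ T) ∧ i0 ∈ B ∪ T ∧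
            ((B ∪ T).filter (fun t : Fin n => (t : ℕ) < i)).card = j'
        then worldProb g p (B ∪ T) else 0)
      = if i0 ∈ B ∧ (B.filter (fun t : Fin n => (t : ℕ) < i)).card = j'
        then (if Set.InjOn g ↑B then worldProbI g p (i + 1) B else 0) else 0 := by
    intro B hB
    rw [Finset.mem_powerset] at hB
    have hstep : ∀ T ∈ tl.powerset,
        (if Set.InjOn g ↑(B ∪ T) ∧ i0 ∈ B ∪ T ∧
            ((B ∪ T).filter (fun t : Fin n => (t : ℕ) < i)).card = j'
         then worldProb g p (B ∪ T) else 0)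
        = if i0 ∈ B ∧ (B.filter (fun t : Fin n => (t : ℕ) < i)).card = j'
          then (if Set.InjOn g ↑(B ∪ T) then worldProb g p (B ∪ T) else 0) else 0 := by
      intro T hT
      rw [Finset.mem_powerset] at hT
      have f1 : i0 ∈ B ∪ T ↔ i0 ∈ B := by
        rw [Finset.mem_union]
        constructor
        · rintro (h | h)
          · exact h
          · exact absurd (le_of_eq hvi0) (Finset.mem_filter.mp (hT h)).2
        · exact Or.inl
      have f2 : (B ∪ T).filter (fun t : Fin n => (t : ℕ) < i)
          = B.filter (fun t : Fin n => (t : ℕ) < i) := by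
        rw [Finset.filter_union]
        have : T.filter (fun t : Fin n => (t : ℕ) < i) = ∅ := by
          apply Finset.filter_false_of_mem
          intro t ht
          have := (Finset.mem_filter.mp (hT ht)).2
          omega
        rw [this, Finset.union_empty]
      by_cases hc : i0 ∈ B ∧ (B.filter (fun t : Fin n => (t : ℕ) < i)).card = j'
      · rw [if_pos hc]
        apply if_congr _ rfl rfl
        constructor
        · exact fun h => h.1
        · intro h
          exact ⟨h, f1.mpr hc.1, by rw [f2]; exact hc.2⟩
      · rw [if_neg hc, if_neg]
        rintro ⟨hinj, hmem, hcard⟩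
        exact hc ⟨f1.mp hmem, by rw [← f2]; exact hcard⟩
    rw [Finset.sum_congr rfl hstep]
    by_cases hc : i0 ∈ B ∧ (B.filter (fun t : Fin n => (t : ℕ) < i)).card = j'
    · rw [if_pos hc, Finset.sum_congr rfl (fun T _ => if_pos hc), innerC g p i B hB]
    · rw [if_neg hc, Finset.sum_eq_zero (fun T _ => if_neg hc)]
  rw [Finset.sum_congr rfl inner]
  have hpreb : pre = insert i0 below := by
    ext t
    simp only [hpre, hbelow, Finset.mem_filter, Finset.mem_univ, true_and,
      Finset.mem_insert, Fin.ext_iff, hvi0]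
    omega
  have hi0nb : i0 ∉ below := by
    simp only [hbelow, Finset.mem_filter, Finset.mem_univ, true_and, hvi0]
    omega
  rw [hpreb, Finset.sum_powerset_insert hi0nb]
  have hzero : ∑ B ∈ below.powerset,
      (if i0 ∈ B ∧ (B.filter (fun t : Fin n => (t : ℕ) < i)).card = j'
       then (if Set.InjOn g ↑B then worldProbI g p (i + 1) B else 0) else 0) = 0 := by
    apply Finset.sum_eq_zero
    intro B hB
    rw [Finset.mem_powerset] at hB
    rw [if_neg]
    rintro ⟨h1, -⟩
    exact hi0nb (hB h1)
  rw [hzero, zero_add]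
  apply Finset.sum_congr rfl
  intro B hB
  rw [Finset.mem_powerset] at hB
  have hi0B : i0 ∉ B := fun h => hi0nb (hB h)
  have e3 : (insert i0 B).filter (fun t : Fin n => (t : ℕ) < i) = B := by
    rw [Finset.filter_insert, if_neg (by omega : ¬ ((i0 : ℕ) < i))]
    apply Finset.filter_true_of_mem
    intro t ht
    exact (Finset.mem_filter.mp (hB ht)).2
  have e4 : Set.InjOn g ↑(insert i0 B) ↔ Set.InjOn g ↑B ∧ g i0 ∉ B.image g := by
    rw [Finset.coe_insert, Set.injOn_insert (by simpa using hi0B)]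
    constructor
    · rintro ⟨h1, h2⟩
      refine ⟨h1, fun hc => h2 ?_⟩
      rw [← Finset.coe_image] at *
      exact Finset.mem_coe.mpr hc
    · rintro ⟨h1, h2⟩
      refine ⟨h1, fun hc => h2 ?_⟩
      rw [← Finset.coe_image] at hc
      exact Finset.mem_coe.mp hc
  by_cases h1 : Set.InjOn g ↑B ∧ g i0 ∉ B.image g ∧ B.card = j'
  · rw [if_pos ⟨Finset.mem_insert_self _ _, by rw [e3]; exact h1.2.2⟩,
      if_pos (e4.mpr ⟨h1.1, h1.2.1⟩), if_pos h1]
    rw [worldProbI, hfilt, Finset.prod_insert hi0B, hp1, one_mul, Finset.image_insert]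
    have e5 : Finset.univ \ insert (g i0) (B.image g)
        = (Finset.univ \ B.image g) \ {g i0} := by
      ext x
      simp only [Finset.mem_sdiff, Finset.mem_insert, Finset.mem_univ, true_and,
        Finset.mem_singleton, not_or]
      tauto
    rw [e5]
    congr 1
    apply Finset.prod_congr rfl
    intro a ha
    have : a ≠ g i0 := by
      rw [Finset.mem_sdiff, Finset.mem_singleton] at ha
      exact ha.2
    rw [hrho_succ a this]
  · rw [if_neg h1]
    by_cases h2 : B.card = j'
    · rw [if_pos ⟨Finset.mem_insert_self _ _, by rw [e3]; exact h2⟩, if_neg]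
      intro hinj
      rw [e4] at hinj
      exact h1 ⟨hinj.1, hinj.2, h2⟩
    · rw [if_neg]
      rintro ⟨-, hc⟩
      rw [e3] at hc
      exact h2 hc

/-- Tightness of the upper bound: if the next tuple has probability 1 then its
top-`k` probability equals the partial sum `Σ_{j<k} r_{i,j}`; hence the bound
`tkp_k(t_{i+1}) ≤ Σ_{j<k} r_{i,j}` is tight for an arbitrary sequence of tuples. -/
theorem tkp_eq_partial_sum_of_prob_one (n m : ℕ) (g : Fin n → Fin m) (p : Fin n → ℝ)
    (hp : ∀ t, 0 ≤ p t)
    (hsum : ∀ a : Fin m, ∑ t ∈ Finset.univ.filter (fun t : Fin n => g t = a), p t ≤ 1)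
    (i : ℕ) (hi : i < n) (k : ℕ) (hk : 1 ≤ k)
    (hp1 : p ⟨i, hi⟩ = 1) :
    tkp g p k ⟨i, hi⟩ = ∑ j ∈ Finset.range k, PB Finset.univ (rho g p i) j := by
  have hpz : ∀ t : Fin n, g t = g ⟨i, hi⟩ → t ≠ ⟨i, hi⟩ → p t = 0 := by
    intro t hgt htne
    have hle := hsum (g ⟨i, hi⟩)
    have hsub : ({t, ⟨i, hi⟩} : Finset (Fin n)) ⊆
        Finset.univ.filter (fun t' : Fin n => g t' = g ⟨i, hi⟩) := by
      intro x hx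
      rcases Finset.mem_insert.mp hx with h | h
      · subst h
        exact Finset.mem_filter.mpr ⟨Finset.mem_univ _, hgt⟩
      · rw [Finset.mem_singleton] at h
        subst h
        exact Finset.mem_filter.mpr ⟨Finset.mem_univ _, rfl⟩
    have hmono := Finset.sum_le_sum_of_subset_of_nonneg hsub (fun x _ _ => hp x)
    rw [Finset.sum_pair htne, hp1] at hmono
    have := hp t
    linarith
  have hrho0 : rho g p i (g ⟨i, hi⟩) = 0 := by
    rw [rho]
    apply Finset.sum_eq_zero
    intro t ht
    have h := Finset.mem_filter.mp ht
    apply hpz t h.2.2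
    intro he
    rw [he] at h
    exact lt_irrefl i h.2.1
  rw [tkp, ← Finset.Ico_add_one_right_eq_Icc, Finset.sum_Ico_eq_sum_range]
  apply Finset.sum_congr rfl
  intro j' _
  rw [add_comm 1 j', pijstep g p i hi hp1 j', PBstep g p i j']
  apply Finset.sum_congr rfl
  intro B hB
  rw [Finset.mem_powerset] at hB
  by_cases h1 : Set.InjOn g ↑B ∧ B.card = j'
  · by_cases h2 : g ⟨i, hi⟩ ∈ B.image g
    · rw [if_neg (fun hc => hc.2.1 h2), if_pos h1]
      obtain ⟨t, htB, hgt⟩ := Finset.mem_image.mp h2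
      have htlt : (t : ℕ) < i := (Finset.mem_filter.mp (hB htB)).2
      have htne : t ≠ ⟨i, hi⟩ := by
        intro he
        rw [he] at htlt
        exact lt_irrefl i htlt
      rw [Finset.prod_eq_zero htB (hpz t hgt htne), zero_mul]
    · rw [if_pos ⟨h1.1, h2, h1.2⟩, if_pos h1]
      rw [Finset.prod_eq_mul_prod_sdiff_singleton_of_mem
        (Finset.mem_sdiff.mpr ⟨Finset.mem_univ _, h2⟩) (fun a => 1 - rho g p i a),
        hrho0, sub_zero, one_mul]
  · rw [if_neg (fun hc => h1 ⟨hc.1, hc.2.2⟩), if_neg h1]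
end

section
/- Early-stop bound for all unseen tuples: for every 1 ≤ i ≤ n, every k ≥ 1, and every tuple index s with i < s ≤ n, the top-k probability of the unseen tuple t_s satisfies tkp_k(s) ≤ Σ_{j=0}^{k−1} r_{i,j}. -/
open Finset
open scoped Classical

noncomputable def wt {n m : ℕ} (g : Fin n → Fin m) (p : Fin n → ℝ) (a : Fin m) :
    Option (Fin n) → ℝ
  | none => 1 - ∑ t ∈ Finset.univ.filter (fun t : Fin n => g t = a), p t
  | some t => p t

noncomputable def CT {n m : ℕ} (g : Fin n → Fin m) (i : ℕ) (T : Finset (Fin m)) (a : Fin m) :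
    Finset (Option (Fin n)) :=
  if a ∈ T then (Finset.univ.filter (fun t : Fin n => g t = a ∧ (t : ℕ) < i)).image some
  else insert none ((Finset.univ.filter (fun t : Fin n => g t = a ∧ i ≤ (t : ℕ))).image some)

lemma CT_some {n m : ℕ} {g : Fin n → Fin m} {i : ℕ} {T : Finset (Fin m)} {a : Fin m} {t : Fin n}
    (h : some t ∈ CT g i T a) : g t = a ∧ ((t : ℕ) < i ↔ a ∈ T) := by
  unfold CT at h
  by_cases hT : a ∈ T <;> simp [hT] at h
  · exact ⟨h.1, by simp [h.2, hT]⟩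
  · exact ⟨h.1, by simp [hT]; omega⟩

lemma CT_mem_T {n m : ℕ} {g : Fin n → Fin m} {i : ℕ} {T : Finset (Fin m)} {a : Fin m}
    {o : Option (Fin n)} (h : o ∈ CT g i T a) (hT : a ∈ T) : ∃ t, o = some t := by
  unfold CT at h
  simp [hT] at h
  obtain ⟨t, _, ht⟩ := h
  exact ⟨t, ht.symm⟩

lemma sum_wt {n m : ℕ} (g : Fin n → Fin m) (p : Fin n → ℝ) (i : ℕ) (T : Finset (Fin m))
    (a : Fin m) :
    ∑ o ∈ CT g i T a, wt g p a o =
      if a ∈ T then rho g p i a else 1 - rho g p i a := by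
  have hsplit : ∑ t ∈ Finset.univ.filter (fun t : Fin n => g t = a), p t
      = rho g p i a + ∑ t ∈ Finset.univ.filter (fun t : Fin n => g t = a ∧ i ≤ (t : ℕ)), p t := by
    have h := Finset.sum_filter_add_sum_filter_not
      (Finset.univ.filter (fun t : Fin n => g t = a)) (fun t => (t : ℕ) < i) p
    rw [Finset.filter_filter, Finset.filter_filter] at h
    rw [← h, rho]
    congr 1
    · apply Finset.sum_congr _ (fun _ _ => rfl)
      ext t; simp [and_comm]
    · apply Finset.sum_congr _ (fun _ _ => rfl)
      ext t; simp [not_lt]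
  by_cases hT : a ∈ T <;> simp only [CT, hT, if_true, if_false]
  · rw [Finset.sum_image (by intro x _ y _ h; simpa using h)]
    simp only [wt, rho]
    apply Finset.sum_congr _ (fun _ _ => rfl)
    ext t; simp [and_comm]
  · rw [Finset.sum_insert (by simp)]
    rw [Finset.sum_image (by intro x _ y _ h; simpa using h)]
    simp only [wt]
    rw [hsplit]; ring

section Main

variable {n m : ℕ} {g : Fin n → Fin m} {i : ℕ} {T : Finset (Fin m)} {f : Fin m → Option (Fin n)}

/-- basic facts about a choice function -/
lemma choice_some (hf : ∀ a, f a ∈ CT g i T a) {a : Fin m} {t : Fin n} (h : f a = some t) :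
    g t = a ∧ f (g t) = some t := by
  have hc := CT_some (h ▸ hf a)
  exact ⟨hc.1, hc.1.symm ▸ h⟩

lemma choice_none (hf : ∀ a, f a ∈ CT g i T a) {a : Fin m}
    (h : ¬ ∃ t, f (g t) = some t ∧ g t = a) : f a = none := by
  cases hfa : f a with
  | none => rfl
  | some t => exact absurd ⟨t, (choice_some hf hfa).2, (choice_some hf hfa).1⟩ h

lemma choice_mem_T (hf : ∀ a, f a ∈ CT g i T a) {a : Fin m} :
    a ∈ T ↔ ∃ t : Fin n, f (g t) = some t ∧ (t : ℕ) < i ∧ g t = a := by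
  constructor
  · intro ha
    obtain ⟨t, hto⟩ := CT_mem_T (hf a) ha
    have h := CT_some (hto ▸ hf a)
    exact ⟨t, (choice_some hf hto).2, h.2.mpr ha, h.1⟩
  · rintro ⟨t, hts, hlt, hga⟩
    have h := CT_some (hts ▸ hf (g t))
    exact hga ▸ h.2.mp hlt

lemma sum_worlds_eq_PB (g : Fin n → Fin m) (p : Fin n → ℝ) (i : ℕ) (j : ℕ) :
    ∑ S ∈ Finset.univ.filter (fun S : Finset (Fin n) =>
        Set.InjOn g ↑S ∧ (S.filter (fun t : Fin n => (t : ℕ) < i)).card = j), worldProb g p S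
      = PB Finset.univ (rho g p i) j := by
  have hPB : PB Finset.univ (rho g p i) j
      = ∑ x ∈ (Finset.powersetCard j (Finset.univ : Finset (Fin m))).sigma
          (fun T => Fintype.piFinset (CT g i T)),
          ∏ a : Fin m, wt g p a (x.2 a) := by
    rw [Finset.sum_sigma, PB]
    apply Finset.sum_congr rfl
    intro T hT
    rw [← Finset.prod_univ_sum (CT g i T) (fun a o => wt g p a o)]
    rw [Finset.prod_congr rfl (fun a _ => sum_wt g p i T a)]
    rw [← Finset.prod_sdiff (Finset.subset_univ T), mul_comm]
    congr 1
    · exact Finset.prod_congr rfl (fun a ha => by simp [(Finset.mem_sdiff.mp ha).2])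
    · exact Finset.prod_congr rfl (fun a ha => by simp [ha])
  rw [hPB]
  symm
  apply Finset.sum_bij
    (i := fun (x : Σ _ : Finset (Fin m), (Fin m → Option (Fin n))) _ =>
      Finset.univ.filter (fun t : Fin n => x.2 (g t) = some t))
  · -- membership
    rintro ⟨T, f⟩ hx
    simp only [Finset.mem_sigma, Finset.mem_powersetCard, Fintype.mem_piFinset] at hx
    obtain ⟨⟨_, hTcard⟩, hf⟩ := hx
    set S := Finset.univ.filter (fun t : Fin n => f (g t) = some t) with hSdef
    have hmemS : ∀ t, t ∈ S ↔ f (g t) = some t := by intro t; simp [hSdef]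
    have hinj : Set.InjOn g ↑S := by
      intro t1 ht1 t2 ht2 he
      have h1 := (hmemS t1).mp ht1
      have h2 := (hmemS t2).mp ht2
      rw [he, h2] at h1
      exact (Option.some_injective _ h1).symm
    simp only [Finset.mem_filter, Finset.mem_univ, true_and]
    refine ⟨hinj, ?_⟩
    rw [← hTcard]
    apply Finset.card_bij (fun t _ => g t)
    · intro t ht
      simp only [Finset.mem_filter] at ht
      have hts := (hmemS t).mp ht.1
      exact (CT_some (hts ▸ hf (g t))).2.mp ht.2
    · intro t1 h1 t2 h2 he
      exact hinj (Finset.mem_coe.mpr (Finset.filter_subset _ _ h1))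
        (Finset.mem_coe.mpr (Finset.filter_subset _ _ h2)) he
    · intro a ha
      obtain ⟨t, hts, hlt, hga⟩ := (choice_mem_T hf).mp ha
      exact ⟨t, Finset.mem_filter.mpr ⟨(hmemS t).mpr hts, hlt⟩, hga⟩
  · -- injectivity
    rintro ⟨T1, f1⟩ hx1 ⟨T2, f2⟩ hx2 he
    simp only [Finset.mem_sigma, Finset.mem_powersetCard, Fintype.mem_piFinset] at hx1 hx2
    have hf1 := hx1.2
    have hf2 := hx2.2
    have hfe : ∀ t : Fin n, (f1 (g t) = some t) ↔ (f2 (g t) = some t) := by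
      intro t
      have := Finset.ext_iff.mp he t
      simpa using this
    have hT : T1 = T2 := by
      ext a
      rw [choice_mem_T hf1, choice_mem_T hf2]
      constructor
      · rintro ⟨t, h1, h2, h3⟩; exact ⟨t, (hfe t).mp h1, h2, h3⟩
      · rintro ⟨t, h1, h2, h3⟩; exact ⟨t, (hfe t).mpr h1, h2, h3⟩
    have hffe : f1 = f2 := by
      funext a
      by_cases h : ∃ t, f1 (g t) = some t ∧ g t = a
      · obtain ⟨t, ht1, ht2⟩ := h
        have e1 : f1 a = some t := ht2 ▸ ht1
        have e2 : f2 a = some t := ht2 ▸ (hfe t).mp ht1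
        rw [e1, e2]
      · have h2 : ¬ ∃ t, f2 (g t) = some t ∧ g t = a := by
          rintro ⟨t, ht1, ht2⟩; exact h ⟨t, (hfe t).mpr ht1, ht2⟩
        rw [choice_none hf1 h, choice_none hf2 h2]
    subst hT; rw [hffe]
  · -- surjectivity
    intro S hS
    simp only [Finset.mem_filter, Finset.mem_univ, true_and] at hS
    obtain ⟨hinj, hcard⟩ := hS
    set T : Finset (Fin m) := (S.filter (fun t : Fin n => (t : ℕ) < i)).image g with hTdef
    have huniq : ∀ t ∈ S, ∀ t' ∈ S, g t = g t' → t = t' := by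
      intro t ht t' ht' he
      exact hinj (Finset.mem_coe.mpr ht) (Finset.mem_coe.mpr ht') he
    set f : Fin m → Option (Fin n) := fun a =>
      if h : ∃ t, t ∈ S ∧ g t = a then some h.choose else none with hfdef
    have hfS : ∀ t ∈ S, f (g t) = some t := by
      intro t ht
      have h : ∃ t', t' ∈ S ∧ g t' = g t := ⟨t, ht, rfl⟩
      have hspec := h.choose_spec
      have : h.choose = t := huniq _ hspec.1 t ht hspec.2
      simp only [hfdef, dif_pos h, this]
    have hfnone : ∀ a : Fin m, (¬ ∃ t, t ∈ S ∧ g t = a) → f a = none := by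
      intro a h; simp only [hfdef, dif_neg h]
    have hfval : ∀ a t, f a = some t → t ∈ S ∧ g t = a := by
      intro a t hfa
      by_cases h : ∃ t', t' ∈ S ∧ g t' = a
      · have hspec := h.choose_spec
        simp only [hfdef, dif_pos h] at hfa
        have : h.choose = t := by injection hfa
        exact this ▸ hspec
      · simp [hfdef, dif_neg h] at hfa
    refine ⟨⟨T, f⟩, ?_, ?_⟩
    · simp only [Finset.mem_sigma, Finset.mem_powersetCard, Fintype.mem_piFinset]
      constructor
      · refine ⟨Finset.subset_univ _, ?_⟩
        rw [hTdef, Finset.card_image_of_injOn, hcard]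
        intro t1 h1 t2 h2 he
        exact hinj (Finset.mem_coe.mpr (Finset.filter_subset _ _ h1))
          (Finset.mem_coe.mpr (Finset.filter_subset _ _ h2)) he
      · intro a
        by_cases h : ∃ t, t ∈ S ∧ g t = a
        · obtain ⟨t, ht, hga⟩ := h
          have hfa : f a = some t := hga ▸ hfS t ht
          rw [hfa]
          unfold CT
          by_cases haT : a ∈ T
          · -- a ∈ T: it has a low witness, which must be t itself
            obtain ⟨t', ht', hga'⟩ := Finset.mem_image.mp (hTdef ▸ haT)
            simp only [Finset.mem_filter] at ht'
            have : t' = t := huniq t' ht'.1 t ht (hga'.trans hga.symm)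
            subst this
            simp [haT, Finset.mem_image, Finset.mem_filter]
            exact ⟨hga, ht'.2⟩
          · simp only [haT, if_false, Finset.mem_insert, Finset.mem_image, Finset.mem_filter]
            right
            refine ⟨t, ⟨Finset.mem_univ t, hga, ?_⟩, rfl⟩
            by_contra hlt
            exact haT (hTdef ▸ Finset.mem_image.mpr
              ⟨t, Finset.mem_filter.mpr ⟨ht, by omega⟩, hga⟩)
        · have hfa := hfnone a h
          rw [hfa]
          have haT : a ∉ T := by
            intro haT
            obtain ⟨t', ht', hga'⟩ := Finset.mem_image.mp (hTdef ▸ haT)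
            exact h ⟨t', Finset.filter_subset _ _ ht', hga'⟩
          simp [CT, haT]
    · ext t
      simp only [Finset.mem_filter, Finset.mem_univ, true_and]
      constructor
      · intro hft
        exact (hfval (g t) t hft).1
      · intro ht
        exact hfS t ht
  · -- values
    rintro ⟨T, f⟩ hx
    simp only [Finset.mem_sigma, Finset.mem_powersetCard, Fintype.mem_piFinset] at hx
    have hf := hx.2
    set S := Finset.univ.filter (fun t : Fin n => f (g t) = some t) with hSdef
    have hmemS : ∀ t, t ∈ S ↔ f (g t) = some t := by intro t; simp [hSdef]
    have hinj : Set.InjOn g ↑S := by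
      intro t1 ht1 t2 ht2 he
      have h1 := (hmemS t1).mp ht1
      have h2 := (hmemS t2).mp ht2
      rw [he, h2] at h1
      exact (Option.some_injective _ h1).symm
    show ∏ a : Fin m, wt g p a (f a) = worldProb g p S
    have hnone_eq : ∏ a ∈ Finset.univ.filter (fun a : Fin m => f a = none), wt g p a (f a)
        = ∏ a ∈ Finset.univ.filter (fun a : Fin m => ∀ t ∈ S, g t ≠ a),
            (1 - ∑ t ∈ Finset.univ.filter (fun t : Fin n => g t = a), p t) := by
      have hset : Finset.univ.filter (fun a : Fin m => f a = none)
          = Finset.univ.filter (fun a : Fin m => ∀ t ∈ S, g t ≠ a) := by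
        ext a
        simp only [Finset.mem_filter, Finset.mem_univ, true_and]
        constructor
        · intro hfa t ht hga
          have h2 := (hmemS t).mp ht
          rw [hga, hfa] at h2
          exact absurd h2 (by simp)
        · intro hnone
          cases hfa : f a with
          | none => rfl
          | some t =>
            have hc := choice_some hf hfa
            exact absurd hc.1 (hnone t ((hmemS t).mpr hc.2))
      rw [hset]
      apply Finset.prod_congr rfl
      intro a ha
      rw [← hset] at ha
      have hfa : f a = none := (Finset.mem_filter.mp ha).2
      rw [hfa]
      rfl
    have hsome_eq : ∏ a ∈ Finset.univ.filter (fun a : Fin m => ¬ f a = none), wt g p a (f a)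
        = ∏ t ∈ S, p t := by
      symm
      apply Finset.prod_nbij (fun t => g t)
      · intro t ht
        simp only [Finset.mem_filter, Finset.mem_univ, true_and]
        rw [(hmemS t).mp ht]
        simp
      · exact hinj
      · intro a ha
        simp only [Finset.coe_filter, Set.mem_setOf_eq, Finset.mem_univ, true_and] at ha
        cases hfa : f a with
        | none => exact absurd hfa ha
        | some t =>
          have hc := choice_some hf hfa
          exact ⟨t, by simpa [hSdef] using hc.2, hc.1⟩
      · intro t ht
        have h2 := (hmemS t).mp ht
        rw [h2]
        rfl
    rw [worldProb, ← hnone_eq, ← hsome_eq, mul_comm]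
    exact (Finset.prod_filter_mul_prod_filter_not Finset.univ (fun a => f a = none) _).symm

end Main

lemma filter_coe_card (n i : ℕ) (S : Finset (Fin n)) :
    ((S : Finset (Fin n)).filter (fun t => (t : ℕ) < i)).card
      = (S.filter (fun t : Fin n => (t : ℕ) < i)).card := by
  show (Finset.filter (fun t : ℕ => t < i) (S >>= fun a => pure (a : ℕ))).card = _
  have h1 : (S >>= fun a => pure ((a : ℕ))) = S.image Fin.val := by ext x; simp
  rw [h1, Finset.filter_image]
  exact Finset.card_image_of_injective _ Fin.val_injective

lemma worldProb_nonneg {n m : ℕ} (g : Fin n → Fin m) (p : Fin n → ℝ)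
    (hp : ∀ t, 0 ≤ p t)
    (hsum : ∀ a : Fin m, ∑ t ∈ Finset.univ.filter (fun t : Fin n => g t = a), p t ≤ 1)
    (S : Finset (Fin n)) : 0 ≤ worldProb g p S :=
  mul_nonneg (Finset.prod_nonneg fun t _ => hp t)
    (Finset.prod_nonneg fun a _ => by linarith [hsum a])


/-- Early-stop bound for all unseen tuples: after scanning the top `i` tuples
(`1 ≤ i ≤ n`), the top-`k` probability of any unseen tuple `s` (1-based index
`(s:ℕ)+1 > i`) is at most `Σ_{j<k} r_{i,j}`. -/
theorem tkp_unseen_le_partial_sum (n m : ℕ) (g : Fin n → Fin m) (p : Fin n → ℝ)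
    (hp : ∀ t, 0 ≤ p t)
    (hsum : ∀ a : Fin m, ∑ t ∈ Finset.univ.filter (fun t : Fin n => g t = a), p t ≤ 1)
    (i : ℕ) (hi1 : 1 ≤ i) (hi : i ≤ n) (k : ℕ) (hk : 1 ≤ k)
    (s : Fin n) (hs : i ≤ (s : ℕ)) :
    tkp g p k s ≤ ∑ j ∈ Finset.range k, PB Finset.univ (rho g p i) j := by
  have stepA : tkp g p k s = ∑ S ∈ Finset.univ.filter
      (fun S : Finset (Fin n) => Set.InjOn g ↑S ∧ s ∈ S ∧
        (S.filter (fun t : Fin n => (t : ℕ) < (s : ℕ))).card < k), worldProb g p S := by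
    rw [tkp]
    rw [← Finset.sum_fiberwise_of_maps_to (t := Finset.Icc 1 k)
      (g := fun S : Finset (Fin n) =>
        (S.filter (fun t : Fin n => (t : ℕ) < (s : ℕ))).card + 1)
      (fun S hS => by
        simp only [Finset.mem_filter] at hS
        simp only [Finset.mem_Icc]
        omega) (worldProb g p)]
    apply Finset.sum_congr rfl
    intro j hj
    simp only [Finset.mem_Icc] at hj
    rw [pij]
    apply Finset.sum_congr _ (fun _ _ => rfl)
    ext S
    simp only [Finset.mem_filter, Finset.mem_univ, true_and]
    rw [filter_coe_card n (s : ℕ) S]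
    constructor
    · rintro ⟨h1, h2, h3⟩
      exact ⟨⟨h1, h2, by omega⟩, by omega⟩
    · rintro ⟨⟨h1, h2, h3⟩, h4⟩
      exact ⟨h1, h2, by omega⟩
  have stepB : ∑ j ∈ Finset.range k, PB Finset.univ (rho g p i) j
      = ∑ S ∈ Finset.univ.filter
        (fun S : Finset (Fin n) => Set.InjOn g ↑S ∧
          (S.filter (fun t : Fin n => (t : ℕ) < i)).card < k), worldProb g p S := by
    rw [← Finset.sum_fiberwise_of_maps_to (t := Finset.range k)
      (g := fun S : Finset (Fin n) => (S.filter (fun t : Fin n => (t : ℕ) < i)).card)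
      (fun S hS => by
        simp only [Finset.mem_filter] at hS
        simp only [Finset.mem_range]
        exact hS.2.2) (worldProb g p)]
    apply Finset.sum_congr rfl
    intro j hj
    simp only [Finset.mem_range] at hj
    rw [← sum_worlds_eq_PB g p i j]
    apply Finset.sum_congr _ (fun _ _ => rfl)
    ext S
    simp only [Finset.mem_filter, Finset.mem_univ, true_and]
    constructor
    · rintro ⟨h1, h2⟩
      exact ⟨⟨h1, by omega⟩, h2⟩
    · rintro ⟨⟨h1, h2⟩, h3⟩
      exact ⟨h1, h3⟩
  rw [stepA, stepB]
  apply Finset.sum_le_sum_of_subset_of_nonneg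
  · intro S hS
    simp only [Finset.mem_filter, Finset.mem_univ, true_and] at *
    refine ⟨hS.1, ?_⟩
    have hsub : S.filter (fun t : Fin n => (t : ℕ) < i)
        ⊆ S.filter (fun t : Fin n => (t : ℕ) < (s : ℕ)) :=
      Finset.monotone_filter_right S (fun t ht => by omega)
    have hcc := Finset.card_le_card hsub
    omega
  · intro S _ _
    exact worldProb_nonneg g p hp hsum S
end
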